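/- arXiv:1910.07693 — 7 statements merged into one kernel-verified Lean document; each statement's English description precedes it below -/
import Mathlib

section
/- Assume conditions (α) and (β) hold. Let S be an (A,H,C,G_y)-input containing subspace with V_m ∩ S_M ⊆ S ⊆ S_M, and let R̂ denote the smallest self bounded subspace of the quadruple (A,[B H S],E,[D_z G_z 0]) whose input space is ℝ^m × ℝ^q × S, input map (u,w,v) ↦ Bu + Hw + v and feedthrough (u,w,v) ↦ D_z u + G_z w, assumed to exist. Then S*(A,H,C,G_y) ⊆ V*(A,B,E,D_z) if and only if S + V_m = R̂. -/
noncomputable section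

open Matrix Submodule

section GeneralDefs

variable {X U Y : Type*} [AddCommGroup X] [Module ℝ X] [AddCommGroup U] [Module ℝ U]
  [AddCommGroup Y] [Module ℝ Y]

/-- `V` is an `(A,B,C,D)`-output nulling subspace. -/
def IsOutputNulling (A : X →ₗ[ℝ] X) (B : U →ₗ[ℝ] X) (C : X →ₗ[ℝ] Y) (D : U →ₗ[ℝ] Y)
    (V : Submodule ℝ X) : Prop :=
  ∀ v ∈ V, ∃ u : U, A v + B u ∈ V ∧ C v + D u = 0

/-- `S` is an `(A,B,C,D)`-input containing subspace. -/
def IsInputContaining (A : X →ₗ[ℝ] X) (B : U →ₗ[ℝ] X) (C : X →ₗ[ℝ] Y) (D : U →ₗ[ℝ] Y)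
    (S : Submodule ℝ X) : Prop :=
  ∀ x ∈ S, ∀ u : U, C x + D u = 0 → A x + B u ∈ S

/-- `Vstar` is the largest `(A,B,C,D)`-output nulling subspace, i.e. `V*(A,B,C,D)`. -/
def IsMaxOutputNulling (A : X →ₗ[ℝ] X) (B : U →ₗ[ℝ] X) (C : X →ₗ[ℝ] Y) (D : U →ₗ[ℝ] Y)
    (Vstar : Submodule ℝ X) : Prop :=
  IsOutputNulling A B C D Vstar ∧ ∀ V, IsOutputNulling A B C D V → V ≤ Vstar

/-- `Sstar` is the smallest `(A,B,C,D)`-input containing subspace, i.e. `S*(A,B,C,D)`. -/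
def IsMinInputContaining (A : X →ₗ[ℝ] X) (B : U →ₗ[ℝ] X) (C : X →ₗ[ℝ] Y) (D : U →ₗ[ℝ] Y)
    (Sstar : Submodule ℝ X) : Prop :=
  IsInputContaining A B C D Sstar ∧ ∀ S, IsInputContaining A B C D S → Sstar ≤ S

/-- `V` is `(A,B,C,D)`-self bounded, where `Vstar` is the largest output nulling subspace:
`V` is output nulling and `V ⊇ V* ∩ B(ker D)`. -/
def IsSelfBounded (A : X →ₗ[ℝ] X) (B : U →ₗ[ℝ] X) (C : X →ₗ[ℝ] Y) (D : U →ₗ[ℝ] Y)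
    (Vstar V : Submodule ℝ X) : Prop :=
  IsOutputNulling A B C D V ∧ Vstar ⊓ (LinearMap.ker D).map B ≤ V

/-- `S` is `(A,B,C,D)`-self hidden, where `Sstar` is the smallest input containing subspace:
`S` is input containing and `S ⊆ S* + C⁻¹(im D)`. -/
def IsSelfHidden (A : X →ₗ[ℝ] X) (B : U →ₗ[ℝ] X) (C : X →ₗ[ℝ] Y) (D : U →ₗ[ℝ] Y)
    (Sstar S : Submodule ℝ X) : Prop :=
  IsInputContaining A B C D S ∧ S ≤ Sstar ⊔ (LinearMap.range D).comap C

/-- `Vm` is the smallest `(A,B,C,D)`-self bounded subspace. -/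
def IsMinSelfBounded (A : X →ₗ[ℝ] X) (B : U →ₗ[ℝ] X) (C : X →ₗ[ℝ] Y) (D : U →ₗ[ℝ] Y)
    (Vstar Vm : Submodule ℝ X) : Prop :=
  IsSelfBounded A B C D Vstar Vm ∧ ∀ V, IsSelfBounded A B C D Vstar V → Vm ≤ V

/-- `SM` is the largest `(A,B,C,D)`-self hidden subspace. -/
def IsMaxSelfHidden (A : X →ₗ[ℝ] X) (B : U →ₗ[ℝ] X) (C : X →ₗ[ℝ] Y) (D : U →ₗ[ℝ] Y)
    (Sstar SM : Submodule ℝ X) : Prop :=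
  IsSelfHidden A B C D Sstar SM ∧ ∀ S, IsSelfHidden A B C D Sstar S → S ≤ SM

end GeneralDefs

section MatrixDefs

variable {n m q p r s : ℕ}

/-- `⟨M|U⟩` : the smallest `M`-invariant subspace containing `U`. -/
def invHull (M : Matrix (Fin n) (Fin n) ℝ) (U : Submodule ℝ (Fin n → ℝ)) :
    Submodule ℝ (Fin n → ℝ) :=
  sInf {W | U ≤ W ∧ ∀ x ∈ W, M.mulVec x ∈ W}

/-- `⟨U|M⟩` : the largest `M`-invariant subspace contained in `U`. -/
def invCore (M : Matrix (Fin n) (Fin n) ℝ) (U : Submodule ℝ (Fin n → ℝ)) :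
    Submodule ℝ (Fin n → ℝ) :=
  sSup {W | W ≤ U ∧ ∀ x ∈ W, M.mulVec x ∈ W}

open scoped Classical in
/-- `σ(M | J₂/J₁)`: the multiset of complex roots (with multiplicity) of the characteristic
polynomial of the map induced by `M` on the quotient `J₂ ⧸ J₁`, for `M`-invariant `J₁ ≤ J₂`. -/
def quotSpec (M : Matrix (Fin n) (Fin n) ℝ)
    (J₁ J₂ : Submodule ℝ (Fin n → ℝ)) : Multiset ℂ :=
  if h : J₁ ≤ J₂ ∧ (∀ x ∈ J₁, M.mulVec x ∈ J₁) ∧ (∀ x ∈ J₂, M.mulVec x ∈ J₂) then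
    (((Submodule.mapQ (J₁.comap J₂.subtype) (J₁.comap J₂.subtype)
        (M.mulVecLin.restrict (p := J₂) (q := J₂) (fun x hx => h.2.2 x hx))
        (fun x hx => h.2.1 x.1 hx)).charpoly).map (algebraMap ℝ ℂ)).roots
  else 0

/-- `σ(M)`: the multiset of complex roots (with multiplicity) of the characteristic
polynomial of the square matrix `M`. -/
def specMat {ι : Type*} [Fintype ι] [DecidableEq ι] (M : Matrix ι ι ℝ) : Multiset ℂ :=
  ((M.charpoly).map (algebraMap ℝ ℂ)).roots

/-- Condition (α). -/
def CondAlpha (B : Matrix (Fin n) (Fin m) ℝ) (H : Matrix (Fin n) (Fin q) ℝ)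
    (Dz : Matrix (Fin r) (Fin m) ℝ) (Gz : Matrix (Fin r) (Fin q) ℝ)
    (V : Submodule ℝ (Fin n → ℝ)) : Prop :=
  ∀ w : Fin q → ℝ, ∃ u : Fin m → ℝ,
    H.mulVec w + B.mulVec u ∈ V ∧ Gz.mulVec w + Dz.mulVec u = 0

/-- Condition (β). -/
def CondBeta (C : Matrix (Fin p) (Fin n) ℝ) (Gy : Matrix (Fin p) (Fin q) ℝ)
    (E : Matrix (Fin r) (Fin n) ℝ) (Gz : Matrix (Fin r) (Fin q) ℝ)
    (S : Submodule ℝ (Fin n → ℝ)) : Prop :=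
  ∀ x ∈ S, ∀ w : Fin q → ℝ, C.mulVec x + Gy.mulVec w = 0 → E.mulVec x + Gz.mulVec w = 0

/-- `(S,V;K)` is a solution triple of DDPDOF. -/
def IsSolutionTriple (A : Matrix (Fin n) (Fin n) ℝ) (B : Matrix (Fin n) (Fin m) ℝ)
    (H : Matrix (Fin n) (Fin q) ℝ) (C : Matrix (Fin p) (Fin n) ℝ)
    (Dy : Matrix (Fin p) (Fin m) ℝ) (Gy : Matrix (Fin p) (Fin q) ℝ)
    (E : Matrix (Fin r) (Fin n) ℝ) (Dz : Matrix (Fin r) (Fin m) ℝ)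
    (Gz : Matrix (Fin r) (Fin q) ℝ)
    (S V : Submodule ℝ (Fin n → ℝ)) (K : Matrix (Fin m) (Fin p) ℝ) : Prop :=
  IsInputContaining A.mulVecLin H.mulVecLin C.mulVecLin Gy.mulVecLin S ∧
  IsOutputNulling A.mulVecLin B.mulVecLin E.mulVecLin Dz.mulVecLin V ∧
  CondAlpha B H Dz Gz V ∧
  CondBeta C Gy E Gz S ∧
  S ≤ V ∧
  IsUnit (1 + K * Dy) ∧
  ∀ x ∈ S, ∀ w : Fin q → ℝ,
    (A + B * K * C).mulVec x + (H + B * K * Gy).mulVec w ∈ V ∧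
    (E + Dz * K * C).mulVec x + (Gz + Dz * K * Gy).mulVec w = 0

/-- `F` is an `(A,B,E,Dz)`-output nulling friend of `V`. -/
def IsONFriend (A : Matrix (Fin n) (Fin n) ℝ) (B : Matrix (Fin n) (Fin m) ℝ)
    (E : Matrix (Fin r) (Fin n) ℝ) (Dz : Matrix (Fin r) (Fin m) ℝ)
    (V : Submodule ℝ (Fin n → ℝ)) (F : Matrix (Fin m) (Fin n) ℝ) : Prop :=
  (∀ v ∈ V, (A + B * F).mulVec v ∈ V) ∧ ∀ v ∈ V, (E + Dz * F).mulVec v = 0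

/-- `G` is an `(A,H,C,Gy)`-input containing friend of `S`. -/
def IsICFriend (A : Matrix (Fin n) (Fin n) ℝ) (H : Matrix (Fin n) (Fin q) ℝ)
    (C : Matrix (Fin p) (Fin n) ℝ) (Gy : Matrix (Fin p) (Fin q) ℝ)
    (S : Submodule ℝ (Fin n → ℝ)) (G : Matrix (Fin n) (Fin p) ℝ) : Prop :=
  (∀ x ∈ S, (A + G * C).mulVec x ∈ S) ∧ LinearMap.range (H + G * Gy).mulVecLin ≤ S

/-- `σfix(V;F)`. -/
def sigmaFixV (A : Matrix (Fin n) (Fin n) ℝ) (B : Matrix (Fin n) (Fin m) ℝ)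
    (Dz : Matrix (Fin r) (Fin m) ℝ) (V : Submodule ℝ (Fin n → ℝ))
    (F : Matrix (Fin m) (Fin n) ℝ) : Multiset ℂ :=
  quotSpec (A + B * F) (V ⊔ invHull A (LinearMap.range B.mulVecLin)) ⊤ +
  quotSpec (A + B * F)
    (invHull (A + B * F) (V ⊓ (LinearMap.ker Dz.mulVecLin).map B.mulVecLin)) V

/-- `σfix(S;G)`. -/
def sigmaFixS (A : Matrix (Fin n) (Fin n) ℝ) (C : Matrix (Fin p) (Fin n) ℝ)
    (Gy : Matrix (Fin p) (Fin q) ℝ) (S : Submodule ℝ (Fin n → ℝ))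
    (G : Matrix (Fin n) (Fin p) ℝ) : Multiset ℂ :=
  quotSpec (A + G * C) S
    (invCore (A + G * C) (S ⊔ (LinearMap.range Gy.mulVecLin).comap C.mulVecLin)) +
  quotSpec (A + G * C) ⊥ (S ⊓ invCore A (LinearMap.ker C.mulVecLin))

/-- `σfix(S,V;G,F) = σfix(V;F) ⊎ σfix(S;G)`. -/
def sigmaFix (A : Matrix (Fin n) (Fin n) ℝ) (B : Matrix (Fin n) (Fin m) ℝ)
    (C : Matrix (Fin p) (Fin n) ℝ) (Gy : Matrix (Fin p) (Fin q) ℝ)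
    (Dz : Matrix (Fin r) (Fin m) ℝ) (S V : Submodule ℝ (Fin n → ℝ))
    (G : Matrix (Fin n) (Fin p) ℝ) (F : Matrix (Fin m) (Fin n) ℝ) : Multiset ℂ :=
  sigmaFixV A B Dz V F + sigmaFixS A C Gy S G

/-- `W = (I - Dy·Dc)⁻¹`. -/
def clW (Dy : Matrix (Fin p) (Fin m) ℝ) (Dc : Matrix (Fin m) (Fin p) ℝ) :
    Matrix (Fin p) (Fin p) ℝ := (1 - Dy * Dc)⁻¹

/-- The closed-loop matrix `Â`. -/
def clA (A : Matrix (Fin n) (Fin n) ℝ) (B : Matrix (Fin n) (Fin m) ℝ)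
    (C : Matrix (Fin p) (Fin n) ℝ) (Dy : Matrix (Fin p) (Fin m) ℝ)
    (Ac : Matrix (Fin s) (Fin s) ℝ) (Bc : Matrix (Fin s) (Fin p) ℝ)
    (Cc : Matrix (Fin m) (Fin s) ℝ) (Dc : Matrix (Fin m) (Fin p) ℝ) :
    Matrix (Fin n ⊕ Fin s) (Fin n ⊕ Fin s) ℝ :=
  Matrix.fromBlocks (A + B * Dc * clW Dy Dc * C) (B * Cc + B * Dc * clW Dy Dc * Dy * Cc)
    (Bc * clW Dy Dc * C) (Ac + Bc * clW Dy Dc * Dy * Cc)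

/-- The closed-loop matrix `Ĥ`. -/
def clH (B : Matrix (Fin n) (Fin m) ℝ) (H : Matrix (Fin n) (Fin q) ℝ)
    (Dy : Matrix (Fin p) (Fin m) ℝ) (Gy : Matrix (Fin p) (Fin q) ℝ)
    (Bc : Matrix (Fin s) (Fin p) ℝ) (Dc : Matrix (Fin m) (Fin p) ℝ) :
    Matrix (Fin n ⊕ Fin s) (Fin q) ℝ :=
  Matrix.fromRows (H + B * Dc * clW Dy Dc * Gy) (Bc * clW Dy Dc * Gy)

/-- The closed-loop matrix `Ĉ`. -/
def clC (C : Matrix (Fin p) (Fin n) ℝ) (Dy : Matrix (Fin p) (Fin m) ℝ)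
    (E : Matrix (Fin r) (Fin n) ℝ) (Dz : Matrix (Fin r) (Fin m) ℝ)
    (Cc : Matrix (Fin m) (Fin s) ℝ) (Dc : Matrix (Fin m) (Fin p) ℝ) :
    Matrix (Fin r) (Fin n ⊕ Fin s) ℝ :=
  Matrix.fromCols (E + Dz * Dc * clW Dy Dc * C) (Dz * Cc + Dz * Dc * clW Dy Dc * Dy * Cc)

/-- The closed-loop matrix `Ĝ`. -/
def clG (Dy : Matrix (Fin p) (Fin m) ℝ) (Gy : Matrix (Fin p) (Fin q) ℝ)
    (Dz : Matrix (Fin r) (Fin m) ℝ) (Gz : Matrix (Fin r) (Fin q) ℝ)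
    (Dc : Matrix (Fin m) (Fin p) ℝ) : Matrix (Fin r) (Fin q) ℝ :=
  Gz + Dz * Dc * clW Dy Dc * Gy

/-- DDPDOF is solvable. -/
def DDPDOFSolvable (A : Matrix (Fin n) (Fin n) ℝ) (B : Matrix (Fin n) (Fin m) ℝ)
    (H : Matrix (Fin n) (Fin q) ℝ) (C : Matrix (Fin p) (Fin n) ℝ)
    (Dy : Matrix (Fin p) (Fin m) ℝ) (Gy : Matrix (Fin p) (Fin q) ℝ)
    (E : Matrix (Fin r) (Fin n) ℝ) (Dz : Matrix (Fin r) (Fin m) ℝ)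
    (Gz : Matrix (Fin r) (Fin q) ℝ) : Prop :=
  ∃ (s : ℕ) (Ac : Matrix (Fin s) (Fin s) ℝ) (Bc : Matrix (Fin s) (Fin p) ℝ)
    (Cc : Matrix (Fin m) (Fin s) ℝ) (Dc : Matrix (Fin m) (Fin p) ℝ),
    IsUnit (1 - Dy * Dc) ∧ clG Dy Gy Dz Gz Dc = 0 ∧
    ∀ k : ℕ, clC C Dy E Dz Cc Dc * clA A B C Dy Ac Bc Cc Dc ^ k * clH B H Dy Gy Bc Dc = 0

end MatrixDefs

end


/-- Auxiliary: the join of two subspaces each of which can be steered (with zero output)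
into the join is output nulling. -/
private lemma onSupAux {X U Y : Type*} [AddCommGroup X] [Module ℝ X] [AddCommGroup U]
    [Module ℝ U] [AddCommGroup Y] [Module ℝ Y]
    (A : X →ₗ[ℝ] X) (B : U →ₗ[ℝ] X) (C : X →ₗ[ℝ] Y) (D : U →ₗ[ℝ] Y)
    {V₁ V₂ : Submodule ℝ X}
    (h₁ : ∀ v ∈ V₁, ∃ u, A v + B u ∈ V₁ ⊔ V₂ ∧ C v + D u = 0)
    (h₂ : ∀ v ∈ V₂, ∃ u, A v + B u ∈ V₁ ⊔ V₂ ∧ C v + D u = 0) :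
    IsOutputNulling A B C D (V₁ ⊔ V₂) := by
  intro v hv
  obtain ⟨a, ha, b, hb, rfl⟩ := Submodule.mem_sup.mp hv
  obtain ⟨u₁, m₁, o₁⟩ := h₁ a ha
  obtain ⟨u₂, m₂, o₂⟩ := h₂ b hb
  refine ⟨u₁ + u₂, ?_, ?_⟩
  · have e : A (a + b) + B (u₁ + u₂) = (A a + B u₁) + (A b + B u₂) := by
      simp only [map_add]; abel
    rw [e]; exact add_mem m₁ m₂
  · have e : C (a + b) + D (u₁ + u₂) = (C a + D u₁) + (C b + D u₂) := by
      simp only [map_add]; abel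
    rw [e, o₁, o₂, add_zero]

theorem stmt8 {n m q p r : ℕ}
    (A : Matrix (Fin n) (Fin n) ℝ) (B : Matrix (Fin n) (Fin m) ℝ)
    (H : Matrix (Fin n) (Fin q) ℝ) (C : Matrix (Fin p) (Fin n) ℝ)
    (Gy : Matrix (Fin p) (Fin q) ℝ)
    (E : Matrix (Fin r) (Fin n) ℝ) (Dz : Matrix (Fin r) (Fin m) ℝ)
    (Gz : Matrix (Fin r) (Fin q) ℝ)
    (Vstar : Submodule ℝ (Fin n → ℝ))
    (hVstar : IsMaxOutputNulling A.mulVecLin B.mulVecLin E.mulVecLin Dz.mulVecLin Vstar)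
    (Sstar : Submodule ℝ (Fin n → ℝ))
    (hSstar : IsMinInputContaining A.mulVecLin H.mulVecLin C.mulVecLin Gy.mulVecLin Sstar)
    (Vstar1 : Submodule ℝ (Fin n → ℝ))
    (hVstar1 : IsMaxOutputNulling A.mulVecLin (B.mulVecLin.coprod H.mulVecLin) E.mulVecLin
      (Dz.mulVecLin.coprod Gz.mulVecLin) Vstar1)
    (Vm : Submodule ℝ (Fin n → ℝ))
    (hVm : IsMinSelfBounded A.mulVecLin (B.mulVecLin.coprod H.mulVecLin) E.mulVecLin
      (Dz.mulVecLin.coprod Gz.mulVecLin) Vstar1 Vm)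
    (Sstar2 : Submodule ℝ (Fin n → ℝ))
    (hSstar2 : IsMinInputContaining A.mulVecLin H.mulVecLin (C.mulVecLin.prod E.mulVecLin)
      (Gy.mulVecLin.prod Gz.mulVecLin) Sstar2)
    (SM : Submodule ℝ (Fin n → ℝ))
    (hSM : IsMaxSelfHidden A.mulVecLin H.mulVecLin (C.mulVecLin.prod E.mulVecLin)
      (Gy.mulVecLin.prod Gz.mulVecLin) Sstar2 SM)
    (hα : CondAlpha B H Dz Gz Vstar)
    (hβ : CondBeta C Gy E Gz Sstar)
    (S : Submodule ℝ (Fin n → ℝ))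
    (hS : IsInputContaining A.mulVecLin H.mulVecLin C.mulVecLin Gy.mulVecLin S)
    (hS1 : Vm ⊓ SM ≤ S) (hS2 : S ≤ SM)
    (VstarHat : Submodule ℝ (Fin n → ℝ))
    (hVstarHat : IsMaxOutputNulling A.mulVecLin
      ((B.mulVecLin.coprod H.mulVecLin).coprod S.subtype) E.mulVecLin
      ((Dz.mulVecLin.coprod Gz.mulVecLin).coprod (0 : ↥S →ₗ[ℝ] (Fin r → ℝ))) VstarHat)
    (Rhat : Submodule ℝ (Fin n → ℝ))
    (hRhat : IsMinSelfBounded A.mulVecLin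
      ((B.mulVecLin.coprod H.mulVecLin).coprod S.subtype) E.mulVecLin
      ((Dz.mulVecLin.coprod Gz.mulVecLin).coprod (0 : ↥S →ₗ[ℝ] (Fin r → ℝ))) VstarHat Rhat) :
    Sstar ≤ Vstar ↔ S ⊔ Vm = Rhat := by
  classical
  -- `Vstar ≤ Vstar1`
  have hVsV1 : Vstar ≤ Vstar1 := by
    refine hVstar1.2 Vstar ?_
    intro v hv
    obtain ⟨u, h1, h2⟩ := hVstar.1 v hv
    exact ⟨(u, 0), by simpa using h1, by simpa using h2⟩
  -- condition (α) forces `Vstar1 ≤ Vstar`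
  have hV1Vs : Vstar1 ≤ Vstar := by
    have hON : IsOutputNulling A.mulVecLin B.mulVecLin E.mulVecLin Dz.mulVecLin
        (Vstar1 ⊔ Vstar) := by
      refine onSupAux _ _ _ _ ?_ ?_
      · intro v hv
        obtain ⟨⟨u, w⟩, h1, h2⟩ := hVstar1.1 v hv
        obtain ⟨u₂, g1, g2⟩ := hα w
        refine ⟨u - u₂, ?_, ?_⟩
        · have e : A.mulVecLin v + B.mulVecLin (u - u₂)
              = (A.mulVecLin v + (B.mulVecLin.coprod H.mulVecLin) (u, w))
                - (H.mulVec w + B.mulVec u₂) := by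
            simp only [LinearMap.coprod_apply, map_sub, Matrix.mulVecLin_apply]
            abel
          rw [e]
          exact sub_mem (Submodule.mem_sup_left h1) (Submodule.mem_sup_right g1)
        · have e : E.mulVecLin v + Dz.mulVecLin (u - u₂)
              = (E.mulVecLin v + (Dz.mulVecLin.coprod Gz.mulVecLin) (u, w))
                - (Gz.mulVec w + Dz.mulVec u₂) := by
            simp only [LinearMap.coprod_apply, map_sub, Matrix.mulVecLin_apply]
            abel
          rw [e, h2, g2, sub_zero]
      · intro v hv
        obtain ⟨u, h1, h2⟩ := hVstar.1 v hv
        exact ⟨u, Submodule.mem_sup_right h1, h2⟩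
    exact le_sup_left.trans (hVstar.2 _ hON)
  -- `Sstar` is the smallest input containing subspace, and `S` is input containing
  have hSstarS : Sstar ≤ S := hSstar.2 S hS
  -- if `S ≤ Rhat` then `Rhat` is output nulling for the quadruple `Σ₁`
  have mkON1 : S ≤ Rhat → IsOutputNulling A.mulVecLin (B.mulVecLin.coprod H.mulVecLin)
      E.mulVecLin (Dz.mulVecLin.coprod Gz.mulVecLin) Rhat := by
    intro hSR x hx
    obtain ⟨⟨⟨u, w⟩, s⟩, h1, h2⟩ := hRhat.1.1 x hx
    refine ⟨(u, w), ?_, ?_⟩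
    · have e : A.mulVecLin x + (B.mulVecLin.coprod H.mulVecLin) (u, w)
          = (A.mulVecLin x
              + ((B.mulVecLin.coprod H.mulVecLin).coprod S.subtype) ((u, w), s))
            - (s : Fin n → ℝ) := by
        simp only [LinearMap.coprod_apply, Submodule.subtype_apply]
        abel
      rw [e]; exact sub_mem h1 (hSR s.2)
    · have e : E.mulVecLin x + (Dz.mulVecLin.coprod Gz.mulVecLin) (u, w)
          = E.mulVecLin x + ((Dz.mulVecLin.coprod Gz.mulVecLin).coprod
              (0 : ↥S →ₗ[ℝ] (Fin r → ℝ))) ((u, w), s) := by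
        simp
      rw [e]; exact h2
  constructor
  · -- forward direction
    intro hSV
    -- `Sstar2 ≤ Sstar`
    have hS2S : Sstar2 ≤ Sstar := by
      refine hSstar2.2 Sstar ?_
      intro x hx w hw
      have hw1 : C.mulVecLin x + Gy.mulVecLin w = 0 := by
        have := congrArg Prod.fst hw; simpa using this
      exact hSstar.1 x hx w hw1
    have hVmV1 : Vm ≤ Vstar1 := hVstar1.2 Vm hVm.1.1
    -- key step 1 : `Sstar ≤ Vm`
    have hSVm : Sstar ≤ Vm := by
      have hIC : IsInputContaining A.mulVecLin H.mulVecLin C.mulVecLin Gy.mulVecLin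
          (Sstar ⊓ Vm) := by
        intro x hx w hcw
        obtain ⟨hxS, hxV⟩ := Submodule.mem_inf.mp hx
        have hβx : E.mulVec x + Gz.mulVec w = 0 := hβ x hxS w (by simpa using hcw)
        obtain ⟨⟨u₀, w₀⟩, h1, h2⟩ := hVm.1.1 x hxV
        have hz : A.mulVecLin x + H.mulVecLin w ∈ Sstar := hSstar.1 x hxS w hcw
        have hdK : (Dz.mulVecLin.coprod Gz.mulVecLin) (-u₀, w - w₀) = 0 := by
          have e : (Dz.mulVecLin.coprod Gz.mulVecLin) (-u₀, w - w₀)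
              = (E.mulVec x + Gz.mulVec w)
                - (E.mulVecLin x + (Dz.mulVecLin.coprod Gz.mulVecLin) (u₀, w₀)) := by
            simp only [LinearMap.coprod_apply, map_neg, map_sub, Matrix.mulVecLin_apply]
            abel
          rw [e, hβx, h2, sub_zero]
        have hdL : (B.mulVecLin.coprod H.mulVecLin) (-u₀, w - w₀)
            ∈ (LinearMap.ker (Dz.mulVecLin.coprod Gz.mulVecLin)).map
              (B.mulVecLin.coprod H.mulVecLin) :=
          Submodule.mem_map_of_mem (LinearMap.mem_ker.mpr hdK)
        have hdV : (B.mulVecLin.coprod H.mulVecLin) (-u₀, w - w₀) ∈ Vstar1 := by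
          have e : (B.mulVecLin.coprod H.mulVecLin) (-u₀, w - w₀)
              = (A.mulVecLin x + H.mulVecLin w)
                - (A.mulVecLin x + (B.mulVecLin.coprod H.mulVecLin) (u₀, w₀)) := by
            simp only [LinearMap.coprod_apply, map_neg, map_sub, Matrix.mulVecLin_apply]
            abel
          rw [e]
          exact sub_mem (hVsV1 (hSV hz)) (hVmV1 h1)
        have hdVm : (B.mulVecLin.coprod H.mulVecLin) (-u₀, w - w₀) ∈ Vm :=
          hVm.1.2 (Submodule.mem_inf.mpr ⟨hdV, hdL⟩)
        refine Submodule.mem_inf.mpr ⟨hz, ?_⟩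
        have e : A.mulVecLin x + H.mulVecLin w
            = (A.mulVecLin x + (B.mulVecLin.coprod H.mulVecLin) (u₀, w₀))
              + (B.mulVecLin.coprod H.mulVecLin) (-u₀, w - w₀) := by
          simp only [LinearMap.coprod_apply, map_neg, map_sub, Matrix.mulVecLin_apply]
          abel
        rw [e]; exact add_mem h1 hdVm
      exact le_trans (hSstar.2 _ hIC) inf_le_right
    have hS2SM : Sstar2 ≤ SM := hSM.2 Sstar2 ⟨hSstar2.1, le_sup_left⟩
    have hS2Vm : Sstar2 ≤ Vm := hS2S.trans hSVm
    -- key step 2 : `SM ⊔ Vm` is output nulling for `Σ₁`, hence `SM ≤ Vstar1`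
    have hONSMVm : IsOutputNulling A.mulVecLin (B.mulVecLin.coprod H.mulVecLin) E.mulVecLin
        (Dz.mulVecLin.coprod Gz.mulVecLin) (SM ⊔ Vm) := by
      refine onSupAux _ _ _ _ ?_ ?_
      · intro x hx
        obtain ⟨x₀, hx₀, x₁, hx₁, hxe⟩ := Submodule.mem_sup.mp (hSM.1.2 hx)
        obtain ⟨⟨u₀, w₀⟩, h1, h2⟩ := hVm.1.1 x₀ (hS2Vm hx₀)
        have hx₁SM : x₁ ∈ SM := by
          have e : x₁ = x - x₀ := by rw [← hxe]; abel
          rw [e]; exact sub_mem hx (hS2SM hx₀)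
        obtain ⟨a, ha⟩ := LinearMap.mem_range.mp (Submodule.mem_comap.mp hx₁)
        have hEa : Gz.mulVecLin a = E.mulVecLin x₁ := by
          have := congrArg Prod.snd ha; simpa using this
        have hjoint : (C.mulVecLin.prod E.mulVecLin) x₁
            + (Gy.mulVecLin.prod Gz.mulVecLin) (-a) = 0 := by
          rw [map_neg, ← ha]; simp
        have hsm := hSM.1.1 x₁ hx₁SM (-a) hjoint
        refine ⟨(u₀, w₀ + -a), ?_, ?_⟩
        · have e : A.mulVecLin x + (B.mulVecLin.coprod H.mulVecLin) (u₀, w₀ + -a)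
              = (A.mulVecLin x₀ + (B.mulVecLin.coprod H.mulVecLin) (u₀, w₀))
                + (A.mulVecLin x₁ + H.mulVecLin (-a)) := by
            rw [← hxe]
            simp only [LinearMap.coprod_apply, map_add, map_neg, Matrix.mulVecLin_apply]
            abel
          rw [e]
          exact add_mem (Submodule.mem_sup_right h1) (Submodule.mem_sup_left hsm)
        · have e : E.mulVecLin x + (Dz.mulVecLin.coprod Gz.mulVecLin) (u₀, w₀ + -a)
              = (E.mulVecLin x₀ + (Dz.mulVecLin.coprod Gz.mulVecLin) (u₀, w₀))
                + (E.mulVecLin x₁ + Gz.mulVecLin (-a)) := by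
            rw [← hxe]
            simp only [LinearMap.coprod_apply, map_add, map_neg, Matrix.mulVecLin_apply]
            abel
          rw [e, h2, map_neg, hEa]
          simp
      · intro x hx
        obtain ⟨uw, h1, h2⟩ := hVm.1.1 x hx
        exact ⟨uw, Submodule.mem_sup_right h1, h2⟩
    have hSMV1 : SM ⊔ Vm ≤ Vstar1 := hVstar1.2 _ hONSMVm
    have hSV1 : S ≤ Vstar1 := fun x hx => hSMV1 (Submodule.mem_sup_left (hS2 hx))
    -- `Vstar1 ≤ VstarHat`
    have hV1Vh : Vstar1 ≤ VstarHat := by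
      refine hVstarHat.2 Vstar1 ?_
      intro v hv
      obtain ⟨⟨u, w⟩, h1, h2⟩ := hVstar1.1 v hv
      exact ⟨((u, w), 0), by simpa using h1, by simpa using h2⟩
    -- key step 3 : `VstarHat ≤ Vstar1`
    have hVhV1 : VstarHat ≤ Vstar1 := by
      have hON : IsOutputNulling A.mulVecLin (B.mulVecLin.coprod H.mulVecLin) E.mulVecLin
          (Dz.mulVecLin.coprod Gz.mulVecLin) (VstarHat ⊔ Vstar1) := by
        refine onSupAux _ _ _ _ ?_ ?_
        · intro v hv
          obtain ⟨⟨⟨u, w⟩, s⟩, h1, h2⟩ := hVstarHat.1 v hv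
          refine ⟨(u, w), ?_, ?_⟩
          · have e : A.mulVecLin v + (B.mulVecLin.coprod H.mulVecLin) (u, w)
                = (A.mulVecLin v
                    + ((B.mulVecLin.coprod H.mulVecLin).coprod S.subtype) ((u, w), s))
                  - (s : Fin n → ℝ) := by
              simp only [LinearMap.coprod_apply, Submodule.subtype_apply]
              abel
            rw [e]
            exact sub_mem (Submodule.mem_sup_left h1) (Submodule.mem_sup_right (hSV1 s.2))
          · have e : E.mulVecLin v + (Dz.mulVecLin.coprod Gz.mulVecLin) (u, w)
                = E.mulVecLin v + ((Dz.mulVecLin.coprod Gz.mulVecLin).coprod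
                    (0 : ↥S →ₗ[ℝ] (Fin r → ℝ))) ((u, w), s) := by simp
            rw [e]; exact h2
        · intro v hv
          obtain ⟨uw, h1, h2⟩ := hVstar1.1 v hv
          exact ⟨uw, Submodule.mem_sup_right h1, h2⟩
      exact le_sup_left.trans (hVstar1.2 _ hON)
    -- `S ≤ Rhat`
    have hSRh : S ≤ Rhat := by
      intro s hs
      refine hRhat.1.2 (Submodule.mem_inf.mpr ⟨hV1Vh (hSV1 hs), ?_⟩)
      refine Submodule.mem_map.mpr ⟨((0, 0), ⟨s, hs⟩), ?_, ?_⟩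
      · exact LinearMap.mem_ker.mpr (by simp)
      · simp
    -- `Vstar1 ⊓ L ≤ Rhat`
    have hLRh : Vstar1 ⊓ (LinearMap.ker (Dz.mulVecLin.coprod Gz.mulVecLin)).map
        (B.mulVecLin.coprod H.mulVecLin) ≤ Rhat := by
      intro y hy
      obtain ⟨hyV, hyL⟩ := Submodule.mem_inf.mp hy
      obtain ⟨uw, huw, rfl⟩ := Submodule.mem_map.mp hyL
      refine hRhat.1.2 (Submodule.mem_inf.mpr ⟨hV1Vh hyV, ?_⟩)
      refine Submodule.mem_map.mpr ⟨(uw, 0), ?_, ?_⟩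
      · refine LinearMap.mem_ker.mpr ?_
        have h0 : (Dz.mulVecLin.coprod Gz.mulVecLin) uw = 0 := LinearMap.mem_ker.mp huw
        simp [h0]
      · simp
    -- `Rhat` is self bounded for `Σ₁`, hence `Vm ≤ Rhat`
    have hVmRh : Vm ≤ Rhat := hVm.2 Rhat ⟨mkON1 hSRh, hLRh⟩
    -- `S ⊔ Vm` is output nulling for the extended quadruple
    have hONhat : IsOutputNulling A.mulVecLin
        ((B.mulVecLin.coprod H.mulVecLin).coprod S.subtype) E.mulVecLin
        ((Dz.mulVecLin.coprod Gz.mulVecLin).coprod (0 : ↥S →ₗ[ℝ] (Fin r → ℝ))) (S ⊔ Vm) := by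
      refine onSupAux _ _ _ _ ?_ ?_
      · intro x hx
        obtain ⟨x₀, hx₀, x₁, hx₁, hxe⟩ := Submodule.mem_sup.mp (hSM.1.2 (hS2 hx))
        obtain ⟨⟨u₀, w₀⟩, h1, h2⟩ := hVm.1.1 x₀ (hS2Vm hx₀)
        have hx₁S : x₁ ∈ S := by
          have e : x₁ = x - x₀ := by rw [← hxe]; abel
          rw [e]; exact sub_mem hx (hSstarS (hS2S hx₀))
        obtain ⟨a, ha⟩ := LinearMap.mem_range.mp (Submodule.mem_comap.mp hx₁)
        have hCa : Gy.mulVecLin a = C.mulVecLin x₁ := by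
          have := congrArg Prod.fst ha; simpa using this
        have hEa : Gz.mulVecLin a = E.mulVecLin x₁ := by
          have := congrArg Prod.snd ha; simpa using this
        have hCx : C.mulVecLin x₁ + Gy.mulVecLin (-a) = 0 := by
          rw [map_neg, ← hCa]; simp
        have hsS : A.mulVecLin x₁ + H.mulVecLin (-a) ∈ S := hS x₁ hx₁S (-a) hCx
        refine ⟨((u₀, w₀ + -a), 0), ?_, ?_⟩
        · have e : A.mulVecLin x + ((B.mulVecLin.coprod H.mulVecLin).coprod S.subtype)
              ((u₀, w₀ + -a), 0)
              = (A.mulVecLin x₀ + (B.mulVecLin.coprod H.mulVecLin) (u₀, w₀))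
                + (A.mulVecLin x₁ + H.mulVecLin (-a)) := by
            rw [← hxe]
            simp only [LinearMap.coprod_apply, Submodule.subtype_apply, map_add, map_neg,
              Matrix.mulVecLin_apply, ZeroMemClass.coe_zero]
            abel
          rw [e]
          exact add_mem (Submodule.mem_sup_right h1) (Submodule.mem_sup_left hsS)
        · have e : E.mulVecLin x + ((Dz.mulVecLin.coprod Gz.mulVecLin).coprod
              (0 : ↥S →ₗ[ℝ] (Fin r → ℝ))) ((u₀, w₀ + -a), 0)
              = (E.mulVecLin x₀ + (Dz.mulVecLin.coprod Gz.mulVecLin) (u₀, w₀))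
                + (E.mulVecLin x₁ + Gz.mulVecLin (-a)) := by
            rw [← hxe]
            simp only [LinearMap.coprod_apply, LinearMap.zero_apply, map_add, map_neg,
              Matrix.mulVecLin_apply]
            abel
          rw [e, h2, map_neg, hEa]
          simp
      · intro x hx
        obtain ⟨⟨u, w⟩, h1, h2⟩ := hVm.1.1 x hx
        refine ⟨((u, w), 0), ?_, ?_⟩
        · have e : A.mulVecLin x + ((B.mulVecLin.coprod H.mulVecLin).coprod S.subtype)
              ((u, w), 0) = A.mulVecLin x + (B.mulVecLin.coprod H.mulVecLin) (u, w) := by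
            simp
          rw [e]; exact Submodule.mem_sup_right h1
        · have e : E.mulVecLin x + ((Dz.mulVecLin.coprod Gz.mulVecLin).coprod
              (0 : ↥S →ₗ[ℝ] (Fin r → ℝ))) ((u, w), 0)
              = E.mulVecLin x + (Dz.mulVecLin.coprod Gz.mulVecLin) (u, w) := by simp
          rw [e]; exact h2
    -- the self boundedness inequality for `S ⊔ Vm`
    have hhatL : VstarHat ⊓ (LinearMap.ker ((Dz.mulVecLin.coprod Gz.mulVecLin).coprod
        (0 : ↥S →ₗ[ℝ] (Fin r → ℝ)))).map
        ((B.mulVecLin.coprod H.mulVecLin).coprod S.subtype) ≤ S ⊔ Vm := by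
      intro y hy
      obtain ⟨hyV, hyL⟩ := Submodule.mem_inf.mp hy
      obtain ⟨⟨uw, s⟩, huw, rfl⟩ := Submodule.mem_map.mp hyL
      have hker : (Dz.mulVecLin.coprod Gz.mulVecLin) uw = 0 := by
        have := LinearMap.mem_ker.mp huw
        simpa using this
      have hBV : (B.mulVecLin.coprod H.mulVecLin) uw ∈ Vstar1 := by
        have e : (B.mulVecLin.coprod H.mulVecLin) uw
            = ((B.mulVecLin.coprod H.mulVecLin).coprod S.subtype) (uw, s)
              - (s : Fin n → ℝ) := by
          simp only [LinearMap.coprod_apply, Submodule.subtype_apply]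
          abel
        rw [e]
        exact sub_mem (hVhV1 hyV) (hSV1 s.2)
      have hBVm : (B.mulVecLin.coprod H.mulVecLin) uw ∈ Vm :=
        hVm.1.2 (Submodule.mem_inf.mpr
          ⟨hBV, Submodule.mem_map_of_mem (LinearMap.mem_ker.mpr hker)⟩)
      have e2 : ((B.mulVecLin.coprod H.mulVecLin).coprod S.subtype) (uw, s)
          = (s : Fin n → ℝ) + (B.mulVecLin.coprod H.mulVecLin) uw := by
        simp only [LinearMap.coprod_apply, Submodule.subtype_apply]
        abel
      rw [e2]
      exact add_mem (Submodule.mem_sup_left s.2) (Submodule.mem_sup_right hBVm)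
    have hRhSVm : Rhat ≤ S ⊔ Vm := hRhat.2 _ ⟨hONhat, hhatL⟩
    exact le_antisymm (sup_le hSRh hVmRh) hRhSVm
  · -- reverse direction
    intro hEq
    have hSRh : S ≤ Rhat := hEq ▸ le_sup_left
    have hRhV1 : Rhat ≤ Vstar1 := hVstar1.2 Rhat (mkON1 hSRh)
    exact fun x hx => hV1Vs (hRhV1 (hSRh (hSstarS hx)))
end

section
/- Assume conditions (α) and (β) hold. Let V be an (A,B,E,D_z)-output nulling subspace with V_m ⊆ V ⊆ V_m + S_M, let π_V : ℝ^n → ℝ^n/V be the canonical projection, and let Q̂ denote the largest self hidden subspace of the quadruple (A,H,[C;E;π_V],[G_y;G_z;0]) whose output map sends (x,w) to (Cx + G_y w, Ex + G_z w, π_V(x)), assumed to exist. Then S*(A,H,C,G_y) ⊆ V*(A,B,E,D_z) if and only if V ∩ S_M = Q̂. -/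
theorem stmt9 {n m q p r : ℕ}
    (A : Matrix (Fin n) (Fin n) ℝ) (B : Matrix (Fin n) (Fin m) ℝ)
    (H : Matrix (Fin n) (Fin q) ℝ) (C : Matrix (Fin p) (Fin n) ℝ)
    (Gy : Matrix (Fin p) (Fin q) ℝ)
    (E : Matrix (Fin r) (Fin n) ℝ) (Dz : Matrix (Fin r) (Fin m) ℝ)
    (Gz : Matrix (Fin r) (Fin q) ℝ)
    (Vstar : Submodule ℝ (Fin n → ℝ))
    (hVstar : IsMaxOutputNulling A.mulVecLin B.mulVecLin E.mulVecLin Dz.mulVecLin Vstar)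
    (Sstar : Submodule ℝ (Fin n → ℝ))
    (hSstar : IsMinInputContaining A.mulVecLin H.mulVecLin C.mulVecLin Gy.mulVecLin Sstar)
    (Vstar1 : Submodule ℝ (Fin n → ℝ))
    (hVstar1 : IsMaxOutputNulling A.mulVecLin (B.mulVecLin.coprod H.mulVecLin) E.mulVecLin
      (Dz.mulVecLin.coprod Gz.mulVecLin) Vstar1)
    (Vm : Submodule ℝ (Fin n → ℝ))
    (hVm : IsMinSelfBounded A.mulVecLin (B.mulVecLin.coprod H.mulVecLin) E.mulVecLin
      (Dz.mulVecLin.coprod Gz.mulVecLin) Vstar1 Vm)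
    (Sstar2 : Submodule ℝ (Fin n → ℝ))
    (hSstar2 : IsMinInputContaining A.mulVecLin H.mulVecLin (C.mulVecLin.prod E.mulVecLin)
      (Gy.mulVecLin.prod Gz.mulVecLin) Sstar2)
    (SM : Submodule ℝ (Fin n → ℝ))
    (hSM : IsMaxSelfHidden A.mulVecLin H.mulVecLin (C.mulVecLin.prod E.mulVecLin)
      (Gy.mulVecLin.prod Gz.mulVecLin) Sstar2 SM)
    (hα : CondAlpha B H Dz Gz Vstar)
    (hβ : CondBeta C Gy E Gz Sstar)
    (V : Submodule ℝ (Fin n → ℝ))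
    (hV : IsOutputNulling A.mulVecLin B.mulVecLin E.mulVecLin Dz.mulVecLin V)
    (hV1 : Vm ≤ V) (hV2 : V ≤ Vm ⊔ SM)
    (SstarHat : Submodule ℝ (Fin n → ℝ))
    (hSstarHat : IsMinInputContaining A.mulVecLin H.mulVecLin
      ((C.mulVecLin.prod E.mulVecLin).prod V.mkQ)
      ((Gy.mulVecLin.prod Gz.mulVecLin).prod (0 : (Fin q → ℝ) →ₗ[ℝ] ((Fin n → ℝ) ⧸ V)))
      SstarHat)
    (Qhat : Submodule ℝ (Fin n → ℝ))
    (hQhat : IsMaxSelfHidden A.mulVecLin H.mulVecLin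
      ((C.mulVecLin.prod E.mulVecLin).prod V.mkQ)
      ((Gy.mulVecLin.prod Gz.mulVecLin).prod (0 : (Fin q → ℝ) →ₗ[ℝ] ((Fin n → ℝ) ⧸ V)))
      SstarHat Qhat) :
    Sstar ≤ Vstar ↔ V ⊓ SM = Qhat := by
  classical
  -- rewrite α, β in `mulVecLin` form
  have hα' : ∀ w : Fin q → ℝ, ∃ u : Fin m → ℝ,
      H.mulVecLin w + B.mulVecLin u ∈ Vstar ∧
      Gz.mulVecLin w + Dz.mulVecLin u = 0 := by
    simpa only [Matrix.mulVecLin_apply, CondAlpha] using hα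
  have hβ' : ∀ x ∈ Sstar, ∀ w : Fin q → ℝ,
      C.mulVecLin x + Gy.mulVecLin w = 0 → E.mulVecLin x + Gz.mulVecLin w = 0 := by
    simpa only [Matrix.mulVecLin_apply, CondBeta] using hβ
  have hVle : V ≤ Vstar := hVstar.2 V hV
  -- Vstar = Vstar1
  have hVs_le : Vstar ≤ Vstar1 := by
    refine hVstar1.2 _ ?_
    intro v hv
    obtain ⟨u, h1, h2⟩ := hVstar.1 v hv
    exact ⟨(u, 0), by simpa using h1, by simpa using h2⟩
  have hVs1_le : Vstar1 ≤ Vstar := by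
    refine hVstar.2 _ ?_
    intro v hv
    obtain ⟨⟨u, w⟩, h1, h2⟩ := hVstar1.1 v hv
    simp only [LinearMap.coprod_apply] at h1 h2
    obtain ⟨u', hu1, hu2⟩ := hα' w
    refine ⟨u - u', ?_, ?_⟩
    · have e : A.mulVecLin v + B.mulVecLin (u - u')
          = (A.mulVecLin v + (B.mulVecLin u + H.mulVecLin w))
            - (H.mulVecLin w + B.mulVecLin u') := by
        rw [map_sub]; abel
      rw [e]
      exact Submodule.sub_mem _ h1 (hVs_le hu1)
    · have e : E.mulVecLin v + Dz.mulVecLin (u - u')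
          = (E.mulVecLin v + (Dz.mulVecLin u + Gz.mulVecLin w))
            - (Gz.mulVecLin w + Dz.mulVecLin u') := by
        rw [map_sub]; abel
      rw [e, h2, hu2, sub_zero]
  -- Sstar = Sstar2
  have hS2_le : Sstar2 ≤ Sstar := by
    refine hSstar2.2 _ ?_
    intro x hx w hw
    have hc : C.mulVecLin x + Gy.mulVecLin w = 0 := by
      have := congrArg Prod.fst hw
      simpa using this
    exact hSstar.1 x hx w hc
  have hS_le2 : Sstar ≤ Sstar2 := by
    refine hSstar.2 _ ?_
    intro x hx w hw
    have hE : E.mulVecLin x + Gz.mulVecLin w = 0 := hβ' x (hS2_le hx) w hw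
    refine hSstar2.1 x hx w ?_
    simp only [LinearMap.prod_apply, Function.prod, Prod.mk_add_mk, Prod.mk_eq_zero]
    exact ⟨hw, hE⟩
  -- Sstar ≤ SM
  have hS2SM : Sstar2 ≤ SM := hSM.2 Sstar2 ⟨hSstar2.1, le_sup_left⟩
  have hS_SM : Sstar ≤ SM := hS_le2.trans hS2SM
  -- the hat comap term equals V ⊓ T
  have hTc : (LinearMap.range ((Gy.mulVecLin.prod Gz.mulVecLin).prod
        (0 : (Fin q → ℝ) →ₗ[ℝ] ((Fin n → ℝ) ⧸ V)))).comap
        ((C.mulVecLin.prod E.mulVecLin).prod V.mkQ)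
      = V ⊓ ((LinearMap.range (Gy.mulVecLin.prod Gz.mulVecLin)).comap
        (C.mulVecLin.prod E.mulVecLin)) := by
    ext x
    simp only [Submodule.mem_comap, LinearMap.mem_range, LinearMap.prod_apply, Function.prod,
      LinearMap.zero_apply, Submodule.mem_inf, Prod.ext_iff, Submodule.mkQ_apply]
    constructor
    · rintro ⟨w, hw1, hw2⟩
      refine ⟨(Submodule.Quotient.mk_eq_zero V).mp hw2.symm, w, hw1⟩
    · rintro ⟨hxV, w, hw⟩
      exact ⟨w, hw, ((Submodule.Quotient.mk_eq_zero V).mpr hxV).symm⟩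
  -- α holds for V
  have hαV : ∀ w : Fin q → ℝ, ∃ u : Fin m → ℝ,
      H.mulVecLin w + B.mulVecLin u ∈ V ∧
      Gz.mulVecLin w + Dz.mulVecLin u = 0 := by
    intro w
    obtain ⟨u, h1, h2⟩ := hα' w
    refine ⟨u, hV1 (hVm.1.2 ?_), h2⟩
    refine Submodule.mem_inf.mpr ⟨hVs_le h1, ?_⟩
    refine Submodule.mem_map.mpr ⟨(u, w), ?_, ?_⟩
    · simp only [LinearMap.mem_ker, LinearMap.coprod_apply]
      rw [add_comm] at h2; exact h2
    · simp only [LinearMap.coprod_apply]; abel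
  -- KEY lemma
  have hKEY : ∀ x ∈ V, ∀ w : Fin q → ℝ, E.mulVecLin x + Gz.mulVecLin w = 0 →
      A.mulVecLin x + H.mulVecLin w ∈ Vstar → A.mulVecLin x + H.mulVecLin w ∈ V := by
    intro x hx w hEw hVs
    obtain ⟨u, h1, h2⟩ := hV x hx
    obtain ⟨u', h1', h2'⟩ := hαV w
    have hb : B.mulVecLin (u + u') ∈ Vm := by
      apply hVm.1.2
      refine Submodule.mem_inf.mpr ⟨?_, ?_⟩
      · have e : B.mulVecLin (u + u')
            = (A.mulVecLin x + B.mulVecLin u) + (H.mulVecLin w + B.mulVecLin u')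
              - (A.mulVecLin x + H.mulVecLin w) := by
          rw [map_add]; abel
        rw [e]
        exact Submodule.sub_mem _
          (Submodule.add_mem _ (hVs_le (hVle h1)) (hVs_le (hVle h1'))) (hVs_le hVs)
      · refine Submodule.mem_map.mpr ⟨(u + u', 0), ?_, ?_⟩
        · simp only [LinearMap.mem_ker, LinearMap.coprod_apply, map_zero, add_zero]
          have e : Dz.mulVecLin (u + u')
              = (E.mulVecLin x + Dz.mulVecLin u) + (Gz.mulVecLin w + Dz.mulVecLin u')
                - (E.mulVecLin x + Gz.mulVecLin w) := by
            rw [map_add]; abel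
          rw [e, h2, h2', hEw]; simp
        · simp only [LinearMap.coprod_apply, map_zero, add_zero]
    have e2 : A.mulVecLin x + H.mulVecLin w
        = (A.mulVecLin x + B.mulVecLin u) + (H.mulVecLin w + B.mulVecLin u')
          - B.mulVecLin (u + u') := by
      rw [map_add]; abel
    rw [e2]
    exact Submodule.sub_mem _ (Submodule.add_mem _ h1 h1') (hV1 hb)
  -- SstarHat ≤ Sstar
  have hSh_le : SstarHat ≤ Sstar := by
    refine (hSstarHat.2 Sstar2 ?_).trans hS2_le
    intro x hx w hw
    refine hSstar2.1 x hx w ?_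
    have := congrArg Prod.fst hw
    simpa using this
  -- SstarHat ≤ Qhat
  have hShQ : SstarHat ≤ Qhat := hQhat.2 SstarHat ⟨hSstarHat.1, le_sup_left⟩
  -- if SstarHat ≤ V then Sstar ≤ SstarHat
  have hL5 : SstarHat ≤ V → Sstar ≤ SstarHat := by
    intro hle
    refine hSstar.2 _ ?_
    intro x hx w hw
    have hE : E.mulVecLin x + Gz.mulVecLin w = 0 := hβ' x (hSh_le hx) w hw
    refine hSstarHat.1 x hx w ?_
    have hm : V.mkQ x = 0 := (Submodule.Quotient.mk_eq_zero V).mpr (hle hx)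
    simp only [LinearMap.prod_apply, Function.prod, LinearMap.zero_apply, Prod.mk_add_mk, add_zero,
      Prod.mk_eq_zero]
    exact ⟨⟨hw, hE⟩, hm⟩
  constructor
  · -- forward direction
    intro hSV
    -- SM ≤ Vstar
    have hSMV : SM ≤ Vstar := by
      have hON : IsOutputNulling A.mulVecLin (B.mulVecLin.coprod H.mulVecLin) E.mulVecLin
          (Dz.mulVecLin.coprod Gz.mulVecLin) (SM ⊔ Vstar) := by
        intro y hy
        rw [Submodule.mem_sup] at hy
        obtain ⟨x, hxSM, v, hv, rfl⟩ := hy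
        have hx' : x ∈ Sstar2 ⊔ (LinearMap.range (Gy.mulVecLin.prod Gz.mulVecLin)).comap
            (C.mulVecLin.prod E.mulVecLin) := hSM.1.2 hxSM
        rw [Submodule.mem_sup] at hx'
        obtain ⟨s, hs, t, ht, hst⟩ := hx'
        rw [Submodule.mem_comap, LinearMap.mem_range] at ht
        obtain ⟨w', hw'⟩ := ht
        simp only [LinearMap.prod_apply, Function.prod, Prod.ext_iff] at hw'
        obtain ⟨hwC, hwE⟩ := hw'
        obtain ⟨us, hs1, hs2⟩ := hVstar.1 s (hSV (hS2_le hs))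
        have htSM : t ∈ SM := by
          have e : t = x - s := by rw [← hst]; abel
          rw [e]
          exact Submodule.sub_mem _ hxSM (hS_SM (hS2_le hs))
        have hq : A.mulVecLin t + H.mulVecLin (-w') ∈ SM := by
          refine hSM.1.1 t htSM (-w') ?_
          simp only [LinearMap.prod_apply, Function.prod, Prod.mk_add_mk, Prod.mk_eq_zero, map_neg, Prod.neg_mk]
          constructor
          · rw [← hwC]; abel
          · rw [← hwE]; abel
        obtain ⟨uv, hv1, hv2⟩ := hVstar.1 v hv
        refine ⟨(us + uv, -w'), ?_, ?_⟩
        · simp only [LinearMap.coprod_apply]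
          have e : A.mulVecLin (x + v) + (B.mulVecLin (us + uv) + H.mulVecLin (-w'))
              = (A.mulVecLin t + H.mulVecLin (-w'))
                + ((A.mulVecLin s + B.mulVecLin us) + (A.mulVecLin v + B.mulVecLin uv)) := by
            rw [map_add, map_add, ← hst, map_add]; abel
          rw [e]
          exact Submodule.add_mem _ (Submodule.mem_sup_left hq)
            (Submodule.mem_sup_right (Submodule.add_mem _ hs1 hv1))
        · simp only [LinearMap.coprod_apply]
          have e : E.mulVecLin (x + v) + (Dz.mulVecLin (us + uv) + Gz.mulVecLin (-w'))
              = (E.mulVecLin s + Dz.mulVecLin us) + (E.mulVecLin v + Dz.mulVecLin uv)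
                + (E.mulVecLin t - Gz.mulVecLin w') := by
            rw [map_add, map_add, ← hst, map_add, map_neg]; abel
          rw [e, hs2, hv2, ← hwE, sub_self]; abel
      have := hVstar1.2 _ hON
      exact le_sup_left.trans (this.trans hVs1_le)
    -- Sstar ⊓ V is hat-input-containing, hence SstarHat ≤ V and Sstar ≤ SstarHat ≤ V
    have hIC : IsInputContaining A.mulVecLin H.mulVecLin
        ((C.mulVecLin.prod E.mulVecLin).prod V.mkQ)
        ((Gy.mulVecLin.prod Gz.mulVecLin).prod (0 : (Fin q → ℝ) →ₗ[ℝ] ((Fin n → ℝ) ⧸ V)))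
        (Sstar ⊓ V) := by
      intro x hx w hw
      simp only [LinearMap.prod_apply, Function.prod, LinearMap.zero_apply, Prod.mk_add_mk, add_zero,
        Prod.mk_eq_zero] at hw
      obtain ⟨⟨hc, he⟩, _⟩ := hw
      have h1 : A.mulVecLin x + H.mulVecLin w ∈ Sstar :=
        hSstar.1 x (Submodule.mem_inf.mp hx).1 w hc
      have h2 : A.mulVecLin x + H.mulVecLin w ∈ V :=
        hKEY x (Submodule.mem_inf.mp hx).2 w he (hSV h1)
      exact Submodule.mem_inf.mpr ⟨h1, h2⟩
    have hShV : SstarHat ≤ V := (hSstarHat.2 _ hIC).trans inf_le_right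
    have hSSh : Sstar ≤ SstarHat := hL5 hShV
    have hSleV : Sstar ≤ V := hSSh.trans hShV
    -- Qhat ≤ V ⊓ SM
    have hQbound : Qhat ≤ SstarHat ⊔ (V ⊓ ((LinearMap.range
        (Gy.mulVecLin.prod Gz.mulVecLin)).comap (C.mulVecLin.prod E.mulVecLin))) := by
      rw [← hTc]; exact hQhat.1.2
    have hQV : Qhat ≤ V := hQbound.trans (sup_le hShV inf_le_left)
    have hQleft : Qhat ≤ V ⊓ SM := by
      refine le_inf hQV ?_
      refine hSM.2 Qhat ⟨?_, ?_⟩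
      · intro x hx w hw
        refine hQhat.1.1 x hx w ?_
        simp only [LinearMap.prod_apply, Function.prod, Prod.mk_add_mk, Prod.mk_eq_zero] at hw
        have hm : V.mkQ x = 0 := (Submodule.Quotient.mk_eq_zero V).mpr (hQV hx)
        simp only [LinearMap.prod_apply, Function.prod, LinearMap.zero_apply, Prod.mk_add_mk, add_zero,
          Prod.mk_eq_zero]
        exact ⟨hw, hm⟩
      · refine hQbound.trans (sup_le ?_ ?_)
        · exact (hSh_le.trans hS_le2).trans le_sup_left
        · exact inf_le_right.trans le_sup_right
    -- V ⊓ SM ≤ Qhat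
    have hQright : V ⊓ SM ≤ Qhat := by
      refine hQhat.2 _ ⟨?_, ?_⟩
      · intro x hx w hw
        simp only [LinearMap.prod_apply, Function.prod, LinearMap.zero_apply, Prod.mk_add_mk, add_zero,
          Prod.mk_eq_zero] at hw
        obtain ⟨⟨hc, he⟩, _⟩ := hw
        have h1 : A.mulVecLin x + H.mulVecLin w ∈ SM := by
          refine hSM.1.1 x (Submodule.mem_inf.mp hx).2 w ?_
          simp only [LinearMap.prod_apply, Function.prod, Prod.mk_add_mk, Prod.mk_eq_zero]
          exact ⟨hc, he⟩
        have h2 : A.mulVecLin x + H.mulVecLin w ∈ V :=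
          hKEY x (Submodule.mem_inf.mp hx).1 w he (hSMV h1)
        exact Submodule.mem_inf.mpr ⟨h2, h1⟩
      · rw [hTc]
        have step1 : V ⊓ SM ≤ V ⊓ (Sstar ⊔ ((LinearMap.range
            (Gy.mulVecLin.prod Gz.mulVecLin)).comap (C.mulVecLin.prod E.mulVecLin))) := by
          refine inf_le_inf_left _ (hSM.1.2.trans (sup_le ?_ le_sup_right))
          exact hS2_le.trans le_sup_left
        refine step1.trans ?_
        rw [inf_comm, sup_inf_assoc_of_le _ hSleV]
        exact sup_le_sup hSSh (by rw [inf_comm])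
    exact le_antisymm hQright hQleft
  · -- reverse direction
    intro hEq
    have h2 : SstarHat ≤ V := hShQ.trans (le_of_eq hEq.symm |>.trans inf_le_left)
    exact ((hL5 h2).trans h2).trans hVle
end

section
/- Assume conditions (α) and (β) hold and that S*(A,H,C,G_y) ⊆ V*(A,B,E,D_z). Let S be an (A,H,C,G_y)-input containing subspace with V_m ∩ S_M ⊆ S ⊆ S_M. Then for every (A,B,E,D_z)-output nulling friend F of S + V_m and every (A,H,C,G_y)-input containing friend G of V_m ∩ S_M: the subspace V_m is (A+BF)-invariant, the subspace S is (A+GC)-invariant, and σ(A+BF | (S+V_m)/V_m) = σ(A+GC | S/(V_m ∩ S_M)) as multisets of complex numbers. -/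
/-- Two endomorphisms conjugate under a linear equivalence have the same charpoly. -/
lemma charpoly_conj_of_comm {M₁ M₂ : Type*} [AddCommGroup M₁] [Module ℝ M₁]
    [AddCommGroup M₂] [Module ℝ M₂] [Module.Finite ℝ M₁] [Module.Free ℝ M₁]
    [Module.Finite ℝ M₂] [Module.Free ℝ M₂]
    (e : M₁ ≃ₗ[ℝ] M₂) (f : Module.End ℝ M₁) (g : Module.End ℝ M₂)
    (h : ∀ x, g (e x) = e (f x)) : f.charpoly = g.charpoly := by
  have hg : g = e.conj f := by
    ext y
    obtain ⟨x, rfl⟩ := e.surjective y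
    simp [LinearEquiv.conj_apply, h x]
  rw [hg, LinearEquiv.charpoly_conj]

theorem stmt10 {n m q p r : ℕ}
    (A : Matrix (Fin n) (Fin n) ℝ) (B : Matrix (Fin n) (Fin m) ℝ)
    (H : Matrix (Fin n) (Fin q) ℝ) (C : Matrix (Fin p) (Fin n) ℝ)
    (Gy : Matrix (Fin p) (Fin q) ℝ)
    (E : Matrix (Fin r) (Fin n) ℝ) (Dz : Matrix (Fin r) (Fin m) ℝ)
    (Gz : Matrix (Fin r) (Fin q) ℝ)
    (Vstar : Submodule ℝ (Fin n → ℝ))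
    (hVstar : IsMaxOutputNulling A.mulVecLin B.mulVecLin E.mulVecLin Dz.mulVecLin Vstar)
    (Sstar : Submodule ℝ (Fin n → ℝ))
    (hSstar : IsMinInputContaining A.mulVecLin H.mulVecLin C.mulVecLin Gy.mulVecLin Sstar)
    (Vstar1 : Submodule ℝ (Fin n → ℝ))
    (hVstar1 : IsMaxOutputNulling A.mulVecLin (B.mulVecLin.coprod H.mulVecLin) E.mulVecLin
      (Dz.mulVecLin.coprod Gz.mulVecLin) Vstar1)
    (Vm : Submodule ℝ (Fin n → ℝ))
    (hVm : IsMinSelfBounded A.mulVecLin (B.mulVecLin.coprod H.mulVecLin) E.mulVecLin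
      (Dz.mulVecLin.coprod Gz.mulVecLin) Vstar1 Vm)
    (Sstar2 : Submodule ℝ (Fin n → ℝ))
    (hSstar2 : IsMinInputContaining A.mulVecLin H.mulVecLin (C.mulVecLin.prod E.mulVecLin)
      (Gy.mulVecLin.prod Gz.mulVecLin) Sstar2)
    (SM : Submodule ℝ (Fin n → ℝ))
    (hSM : IsMaxSelfHidden A.mulVecLin H.mulVecLin (C.mulVecLin.prod E.mulVecLin)
      (Gy.mulVecLin.prod Gz.mulVecLin) Sstar2 SM)
    (hα : CondAlpha B H Dz Gz Vstar)
    (hβ : CondBeta C Gy E Gz Sstar)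
    (hSV : Sstar ≤ Vstar)
    (S : Submodule ℝ (Fin n → ℝ))
    (hS : IsInputContaining A.mulVecLin H.mulVecLin C.mulVecLin Gy.mulVecLin S)
    (hS1 : Vm ⊓ SM ≤ S) (hS2 : S ≤ SM)
    (F : Matrix (Fin m) (Fin n) ℝ) (G : Matrix (Fin n) (Fin p) ℝ)
    (hF : IsONFriend A B E Dz (S ⊔ Vm) F) (hG : IsICFriend A H C Gy (Vm ⊓ SM) G) :
    (∀ x ∈ Vm, (A + B * F).mulVec x ∈ Vm) ∧
    (∀ x ∈ S, (A + G * C).mulVec x ∈ S) ∧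
    quotSpec (A + B * F) Vm (S ⊔ Vm) = quotSpec (A + G * C) (Vm ⊓ SM) S := by
  classical
  -- shorthand for the combined kernel-image subspace
  set KI : Submodule ℝ (Fin n → ℝ) :=
    (LinearMap.ker (Dz.mulVecLin.coprod Gz.mulVecLin)).map
      (B.mulVecLin.coprod H.mulVecLin) with hKI
  have hmem : ∀ (u : Fin m → ℝ) (w : Fin q → ℝ), Dz.mulVec u + Gz.mulVec w = 0 →
      B.mulVec u + H.mulVec w ∈ KI := by
    intro u w h
    exact ⟨(u, w), by simpa [LinearMap.mem_ker] using h, by simp⟩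
  have hVle1 : Vstar ≤ Vstar1 := by
    refine hVstar1.2 Vstar ?_
    intro v hv
    obtain ⟨u, h1, h2⟩ := hVstar.1 v hv
    exact ⟨(u, 0), by simpa using h1, by simpa using h2⟩
  have hSpV : S ⊔ Vm ≤ Vstar := by
    refine hVstar.2 _ ?_
    intro v hv
    refine ⟨F.mulVec v, ?_, ?_⟩
    · simpa [Matrix.add_mulVec, Matrix.mulVec_mulVec] using hF.1 v hv
    · simpa [Matrix.add_mulVec, Matrix.mulVec_mulVec] using hF.2 v hv
  have hVmV1 : Vm ≤ Vstar1 := hVstar1.2 Vm hVm.1.1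
  have hSB : Vstar1 ⊓ KI ≤ Vm := hVm.1.2
  have hSstarComb : IsInputContaining A.mulVecLin H.mulVecLin
      (C.mulVecLin.prod E.mulVecLin) (Gy.mulVecLin.prod Gz.mulVecLin) Sstar := by
    intro x hx w hw
    exact hSstar.1 x hx w (by simpa using congrArg Prod.fst hw)
  have hSComb : IsInputContaining A.mulVecLin H.mulVecLin
      (C.mulVecLin.prod E.mulVecLin) (Gy.mulVecLin.prod Gz.mulVecLin) S := by
    intro x hx w hw
    exact hS x hx w (by simpa using congrArg Prod.fst hw)
  have hS2le : Sstar2 ≤ Sstar := hSstar2.2 Sstar hSstarComb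
  have hS2S : Sstar2 ≤ S := hSstar2.2 S hSComb
  have hS2SM : Sstar2 ≤ SM := hSM.2 Sstar2 ⟨hSstar2.1, le_sup_left⟩
  -- the absorption lemma for Vm
  have hdiff : ∀ x ∈ Vm, ∀ (u : Fin m → ℝ) (w : Fin q → ℝ),
      A.mulVec x + B.mulVec u + H.mulVec w ∈ Vstar1 →
      E.mulVec x + Dz.mulVec u + Gz.mulVec w = 0 →
      A.mulVec x + B.mulVec u + H.mulVec w ∈ Vm := by
    intro x hx u w hin hfeed
    obtain ⟨uw, hq1, hq2⟩ := hVm.1.1 x hx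
    have hq1' : A.mulVec x + (B.mulVec uw.1 + H.mulVec uw.2) ∈ Vm := by simpa using hq1
    have hq2' : E.mulVec x + (Dz.mulVec uw.1 + Gz.mulVec uw.2) = 0 := by simpa using hq2
    have hker : Dz.mulVec (u - uw.1) + Gz.mulVec (w - uw.2) = 0 := by
      have heq : Dz.mulVec (u - uw.1) + Gz.mulVec (w - uw.2)
          = (E.mulVec x + Dz.mulVec u + Gz.mulVec w)
            - (E.mulVec x + (Dz.mulVec uw.1 + Gz.mulVec uw.2)) := by
        rw [Matrix.mulVec_sub, Matrix.mulVec_sub]; abel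
      rw [heq, hfeed, hq2', sub_zero]
    have hmemV1 : B.mulVec (u - uw.1) + H.mulVec (w - uw.2) ∈ Vstar1 := by
      have heq : B.mulVec (u - uw.1) + H.mulVec (w - uw.2)
          = (A.mulVec x + B.mulVec u + H.mulVec w)
            - (A.mulVec x + (B.mulVec uw.1 + H.mulVec uw.2)) := by
        rw [Matrix.mulVec_sub, Matrix.mulVec_sub]; abel
      rw [heq]; exact sub_mem hin (hVmV1 hq1')
    have hVmmem : B.mulVec (u - uw.1) + H.mulVec (w - uw.2) ∈ Vm :=
      hSB ⟨hmemV1, hmem _ _ hker⟩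
    have heq : A.mulVec x + B.mulVec u + H.mulVec w
        = (A.mulVec x + (B.mulVec uw.1 + H.mulVec uw.2))
          + (B.mulVec (u - uw.1) + H.mulVec (w - uw.2)) := by
      rw [Matrix.mulVec_sub, Matrix.mulVec_sub]; abel
    rw [heq]; exact Vm.add_mem hq1' hVmmem
  -- the key inclusion Sstar2 ≤ Vm
  have hS2Vm : Sstar2 ≤ Vm := by
    have hW : IsInputContaining A.mulVecLin H.mulVecLin
        (C.mulVecLin.prod E.mulVecLin) (Gy.mulVecLin.prod Gz.mulVecLin)
        (Sstar2 ⊓ Vm) := by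
      intro x hx w hw
      have hE : E.mulVec x + Gz.mulVec w = 0 := by simpa using congrArg Prod.snd hw
      have hnext : A.mulVec x + H.mulVec w ∈ Sstar2 := by
        simpa using hSstar2.1 x hx.1 w hw
      obtain ⟨u, hu1, hu2⟩ := hα w
      obtain ⟨u'', h1, h2⟩ := hVstar.1 x (hSV (hS2le hx.1))
      have h1' : A.mulVec x + B.mulVec u'' ∈ Vstar := by simpa using h1
      have h2' : E.mulVec x + Dz.mulVec u'' = 0 := by simpa using h2
      have hsumV : A.mulVec x + B.mulVec (u + u'') + H.mulVec w ∈ Vstar1 := by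
        have heq : A.mulVec x + B.mulVec (u + u'') + H.mulVec w
            = (A.mulVec x + B.mulVec u'') + (H.mulVec w + B.mulVec u) := by
          rw [Matrix.mulVec_add]; abel
        rw [heq]; exact hVle1 (Vstar.add_mem h1' hu1)
      have hDz0 : Dz.mulVec (u + u'') = 0 := by
        have heq : Dz.mulVec (u + u'')
            = (Gz.mulVec w + Dz.mulVec u) + (E.mulVec x + Dz.mulVec u'')
              - (E.mulVec x + Gz.mulVec w) := by
          rw [Matrix.mulVec_add]; abel
        rw [heq, hu2, h2', hE]; simp
      have hfeed : E.mulVec x + Dz.mulVec (u + u'') + Gz.mulVec w = 0 := by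
        rw [hDz0]
        simpa using hE
      have hmid : A.mulVec x + B.mulVec (u + u'') + H.mulVec w ∈ Vm :=
        hdiff x hx.2 (u + u'') w hsumV hfeed
      have hAHV1 : A.mulVec x + H.mulVec w ∈ Vstar1 := hVle1 (hSV (hS2le hnext))
      have hBu : B.mulVec (u + u'') ∈ Vm := by
        refine hSB ⟨?_, ?_⟩
        · have heq : B.mulVec (u + u'')
              = (A.mulVec x + B.mulVec (u + u'') + H.mulVec w)
                - (A.mulVec x + H.mulVec w) := by abel
          rw [heq]; exact sub_mem (hVmV1 hmid) hAHV1
        · have := hmem (u + u'') 0 (by simpa using hDz0)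
          simpa using this
      have hfin : A.mulVec x + H.mulVec w ∈ Vm := by
        have heq : A.mulVec x + H.mulVec w
            = (A.mulVec x + B.mulVec (u + u'') + H.mulVec w) - B.mulVec (u + u'') := by
          abel
        rw [heq]; exact sub_mem hmid hBu
      exact ⟨by simpa using hnext, by simpa using hfin⟩
    exact le_trans (hSstar2.2 _ hW) inf_le_right
  have hS2T : Sstar2 ≤ Vm ⊓ SM := le_inf hS2Vm hS2SM
  -- Part 1 : Vm is (A+BF)-invariant
  have hInvVm : ∀ x ∈ Vm, (A + B * F).mulVec x ∈ Vm := by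
    intro x hx
    have hxSV : x ∈ S ⊔ Vm := Submodule.mem_sup_right hx
    have hf1 : A.mulVec x + B.mulVec (F.mulVec x) ∈ S ⊔ Vm := by
      simpa [Matrix.add_mulVec, Matrix.mulVec_mulVec] using hF.1 x hxSV
    have hf2 : E.mulVec x + Dz.mulVec (F.mulVec x) = 0 := by
      simpa [Matrix.add_mulVec, Matrix.mulVec_mulVec] using hF.2 x hxSV
    have hres : A.mulVec x + B.mulVec (F.mulVec x) + H.mulVec 0 ∈ Vm := by
      refine hdiff x hx (F.mulVec x) 0 ?_ ?_
      · simpa using hVle1 (hSpV hf1)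
      · simpa using hf2
    simpa [Matrix.add_mulVec, Matrix.mulVec_mulVec] using hres
  -- decomposition of elements of S
  have hdecomp : ∀ x ∈ S, ∃ s ∈ Sstar2, ∃ c ∈ S, ∃ w : Fin q → ℝ,
      x = s + c ∧ C.mulVec c + Gy.mulVec w = 0 ∧ E.mulVec c + Gz.mulVec w = 0 := by
    intro x hx
    have hx' : x ∈ Sstar2 ⊔ (LinearMap.range
        (Gy.mulVecLin.prod Gz.mulVecLin)).comap (C.mulVecLin.prod E.mulVecLin) :=
      hSM.1.2 (hS2 hx)
    obtain ⟨s, hs, c, hc, hxsc⟩ := Submodule.mem_sup.mp hx'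
    obtain ⟨w, hw⟩ := Submodule.mem_comap.mp hc
    have hCc : Gy.mulVec w = C.mulVec c := by simpa using congrArg Prod.fst hw
    have hEc : Gz.mulVec w = E.mulVec c := by simpa using congrArg Prod.snd hw
    have hcS : c ∈ S := by
      have := S.sub_mem (hxsc ▸ hx) (hS2S hs)
      simpa using this
    refine ⟨s, hs, c, hcS, -w, hxsc.symm, ?_, ?_⟩
    · rw [Matrix.mulVec_neg, hCc]; simp
    · rw [Matrix.mulVec_neg, hEc]; simp
  -- Part 2 : S is (A+GC)-invariant
  have hInvS : ∀ x ∈ S, (A + G * C).mulVec x ∈ S := by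
    intro x hx
    obtain ⟨s, hs, c, hcS, w, rfl, hCw, hEw⟩ := hdecomp x hx
    have h1 : (A + G * C).mulVec s ∈ S := hS1 (hG.1 s (hS2T hs))
    have hAc : A.mulVec c + H.mulVec w ∈ S := by simpa using hS c hcS w (by simpa using hCw)
    have hrange : (H + G * Gy).mulVec w ∈ Vm ⊓ SM := hG.2 ⟨w, rfl⟩
    have h2 : (A + G * C).mulVec c ∈ S := by
      have hCc : C.mulVec c = -(Gy.mulVec w) := eq_neg_of_add_eq_zero_left hCw
      have heq : (A + G * C).mulVec c
          = (A.mulVec c + H.mulVec w) - (H + G * Gy).mulVec w := by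
        rw [Matrix.add_mulVec, Matrix.add_mulVec, ← Matrix.mulVec_mulVec,
          ← Matrix.mulVec_mulVec, hCc, Matrix.mulVec_neg]
        abel
      rw [heq]; exact S.sub_mem hAc (hS1 hrange)
    have := S.add_mem h1 h2
    simpa [Matrix.mulVec_add] using this
  -- the intertwining property
  have hKey : ∀ x ∈ S, (A + B * F).mulVec x - (A + G * C).mulVec x ∈ Vm := by
    intro x hx
    obtain ⟨s, hs, c, hcS, w, rfl, hCw, hEw⟩ := hdecomp x hx
    have hsVm : s ∈ Vm := hS2Vm hs
    have h1 : (A + B * F).mulVec s - (A + G * C).mulVec s ∈ Vm :=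
      sub_mem (hInvVm s hsVm) ((hG.1 s (hS2T hs)).1)
    have hcSV : c ∈ S ⊔ Vm := Submodule.mem_sup_left hcS
    have hf2 : E.mulVec c + Dz.mulVec (F.mulVec c) = 0 := by
      simpa [Matrix.add_mulVec, Matrix.mulVec_mulVec] using hF.2 c hcSV
    have hAc : A.mulVec c + H.mulVec w ∈ S := by simpa using hS c hcS w (by simpa using hCw)
    have hdiffV : H.mulVec w - B.mulVec (F.mulVec c) ∈ Vm := by
      refine hSB ⟨?_, ?_⟩
      · have heq : H.mulVec w - B.mulVec (F.mulVec c)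
            = (A.mulVec c + H.mulVec w) - (A.mulVec c + B.mulVec (F.mulVec c)) := by abel
        have hbf : A.mulVec c + B.mulVec (F.mulVec c) ∈ S ⊔ Vm := by
          simpa [Matrix.add_mulVec, Matrix.mulVec_mulVec] using hF.1 c hcSV
        rw [heq]
        exact sub_mem (hVle1 (hSpV (Submodule.mem_sup_left hAc))) (hVle1 (hSpV hbf))
      · have hker : Dz.mulVec (-(F.mulVec c)) + Gz.mulVec w = 0 := by
          rw [Matrix.mulVec_neg]
          have hDzF : Dz.mulVec (F.mulVec c) = -(E.mulVec c) :=
            eq_neg_of_add_eq_zero_right hf2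
          rw [hDzF, neg_neg]; exact hEw
        have := hmem (-(F.mulVec c)) w hker
        have heq : B.mulVec (-(F.mulVec c)) + H.mulVec w
            = H.mulVec w - B.mulVec (F.mulVec c) := by
          rw [Matrix.mulVec_neg]; abel
        rwa [heq] at this
    have hGGy : (H + G * Gy).mulVec w ∈ Vm := (hG.2 ⟨w, rfl⟩).1
    have h2 : (A + B * F).mulVec c - (A + G * C).mulVec c ∈ Vm := by
      have hCc : C.mulVec c = -(Gy.mulVec w) := eq_neg_of_add_eq_zero_left hCw
      have heq : (A + B * F).mulVec c - (A + G * C).mulVec c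
          = (H + G * Gy).mulVec w - (H.mulVec w - B.mulVec (F.mulVec c)) := by
        rw [Matrix.add_mulVec, Matrix.add_mulVec, Matrix.add_mulVec,
          ← Matrix.mulVec_mulVec, ← Matrix.mulVec_mulVec, ← Matrix.mulVec_mulVec,
          hCc, Matrix.mulVec_neg]
        abel
      rw [heq]; exact sub_mem hGGy hdiffV
    have heq : (A + B * F).mulVec (s + c) - (A + G * C).mulVec (s + c)
        = ((A + B * F).mulVec s - (A + G * C).mulVec s)
          + ((A + B * F).mulVec c - (A + G * C).mulVec c) := by
      rw [Matrix.mulVec_add, Matrix.mulVec_add]; abel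
    rw [heq]; exact Vm.add_mem h1 h2
  -- assemble
  have hc1 : Vm ≤ S ⊔ Vm ∧ (∀ x ∈ Vm, (A + B * F).mulVec x ∈ Vm) ∧
      (∀ x ∈ S ⊔ Vm, (A + B * F).mulVec x ∈ S ⊔ Vm) := ⟨le_sup_right, hInvVm, hF.1⟩
  have hc2 : Vm ⊓ SM ≤ S ∧ (∀ x ∈ Vm ⊓ SM, (A + G * C).mulVec x ∈ Vm ⊓ SM) ∧
      (∀ x ∈ S, (A + G * C).mulVec x ∈ S) := ⟨hS1, hG.1, hInvS⟩
  refine ⟨hInvVm, hInvS, ?_⟩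
  rw [quotSpec, quotSpec, dif_pos hc1, dif_pos hc2]
  -- build the linear equivalence between the two quotients
  have hSVmeq : S ⊓ Vm = Vm ⊓ SM := by
    apply le_antisymm
    · exact fun x hx => ⟨hx.2, hS2 hx.1⟩
    · exact fun x hx => ⟨hS1 hx, hx.1⟩
  set Q : Submodule ℝ (S ⊔ Vm : Submodule ℝ (Fin n → ℝ)) :=
    Vm.comap (S ⊔ Vm : Submodule ℝ (Fin n → ℝ)).subtype with hQ
  set K : Submodule ℝ S := (Vm ⊓ SM).comap S.subtype with hKdef
  set φ : S →ₗ[ℝ] (↥(S ⊔ Vm)) ⧸ Q :=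
    Q.mkQ.comp (Submodule.inclusion le_sup_left) with hφ
  have hφ_apply : ∀ x : S, φ x = Q.mkQ (Submodule.inclusion le_sup_left x) := fun x => rfl
  have hkerφ : LinearMap.ker φ = K := by
    ext x
    simp only [hφ, LinearMap.mem_ker, LinearMap.comp_apply, Submodule.mkQ_apply,
      Submodule.Quotient.mk_eq_zero, hQ, Submodule.mem_comap, Submodule.subtype_apply,
      hKdef]
    constructor
    · intro h; exact ⟨h, hS2 x.2⟩
    · intro h; exact h.1
  have hK_le : K ≤ LinearMap.ker φ := hkerφ.ge
  set ψ : (S ⧸ K) →ₗ[ℝ] (↥(S ⊔ Vm)) ⧸ Q := K.liftQ φ hK_le with hψ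
  have hinj : Function.Injective ψ := by
    rw [← LinearMap.ker_eq_bot, hψ]
    exact Submodule.ker_liftQ_eq_bot _ _ _ hkerφ.le
  have hsurj : Function.Surjective ψ := by
    intro y
    obtain ⟨z, rfl⟩ := Submodule.Quotient.mk_surjective Q y
    obtain ⟨a, ha, b, hb, hab⟩ := Submodule.mem_sup.mp z.2
    refine ⟨Submodule.Quotient.mk ⟨a, ha⟩, ?_⟩
    rw [hψ, Submodule.liftQ_apply, hφ_apply, Submodule.mkQ_apply]
    rw [Submodule.Quotient.eq, hQ, Submodule.mem_comap]
    have hcoe : (S ⊔ Vm).subtype (Submodule.inclusion le_sup_left (⟨a, ha⟩ : S) - z)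
        = -b := by
      rw [map_sub]
      simp only [Submodule.subtype_apply, Submodule.coe_inclusion]
      rw [← hab]; abel
    rw [hcoe]
    exact Vm.neg_mem hb
  set e : (S ⧸ K) ≃ₗ[ℝ] ((↥(S ⊔ Vm)) ⧸ Q) := LinearEquiv.ofBijective ψ ⟨hinj, hsurj⟩
    with he
  have he_apply : ∀ x : S, e (Submodule.Quotient.mk x)
      = Q.mkQ (Submodule.inclusion le_sup_left x) := by
    intro x
    show ψ (Submodule.Quotient.mk x) = _
    rw [hψ, Submodule.liftQ_apply, hφ_apply]
  refine congrArg _ (congrArg _ ?_)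
  refine (charpoly_conj_of_comm e _ _ ?_).symm
  intro y
  obtain ⟨x, rfl⟩ := Submodule.Quotient.mk_surjective K y
  show Submodule.Quotient.mk _ = e (Submodule.Quotient.mk _)
  rw [he_apply, Submodule.mkQ_apply]
  rw [Submodule.Quotient.eq]
  simp only [hQ, Submodule.mem_comap, map_sub, Submodule.subtype_apply,
    LinearMap.restrict_coe_apply, Submodule.coe_inclusion, Matrix.mulVecLin_apply]
  exact hKey x x.2
end

section
/- Assume conditions (α) and (β) hold and that S*(A,H,C,G_y) ⊆ V*(A,B,E,D_z). Then ⟨A | im B + im H⟩ = ⟨A | im B⟩ + V_m, i.e. the smallest A-invariant subspace containing im B + im H equals the sum of the smallest A-invariant subspace containing im B and V_m. -/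
lemma invHull_le_of {n : ℕ} {M : Matrix (Fin n) (Fin n) ℝ} {U W : Submodule ℝ (Fin n → ℝ)}
    (h1 : U ≤ W) (h2 : ∀ x ∈ W, M.mulVec x ∈ W) : invHull M U ≤ W :=
  sInf_le ⟨h1, h2⟩

lemma le_invHull {n : ℕ} (M : Matrix (Fin n) (Fin n) ℝ) (U : Submodule ℝ (Fin n → ℝ)) :
    U ≤ invHull M U :=
  le_sInf fun _ hW => hW.1

lemma invHull_inv {n : ℕ} (M : Matrix (Fin n) (Fin n) ℝ) (U : Submodule ℝ (Fin n → ℝ)) :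
    ∀ x ∈ invHull M U, M.mulVec x ∈ invHull M U := by
  intro x hx
  rw [invHull, Submodule.mem_sInf] at hx ⊢
  intro W hW
  exact hW.2 x (hx W hW)

theorem stmt11 {n m q p r : ℕ}
    (A : Matrix (Fin n) (Fin n) ℝ) (B : Matrix (Fin n) (Fin m) ℝ)
    (H : Matrix (Fin n) (Fin q) ℝ) (C : Matrix (Fin p) (Fin n) ℝ)
    (Gy : Matrix (Fin p) (Fin q) ℝ)
    (E : Matrix (Fin r) (Fin n) ℝ) (Dz : Matrix (Fin r) (Fin m) ℝ)
    (Gz : Matrix (Fin r) (Fin q) ℝ)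
    (Vstar : Submodule ℝ (Fin n → ℝ))
    (hVstar : IsMaxOutputNulling A.mulVecLin B.mulVecLin E.mulVecLin Dz.mulVecLin Vstar)
    (Sstar : Submodule ℝ (Fin n → ℝ))
    (hSstar : IsMinInputContaining A.mulVecLin H.mulVecLin C.mulVecLin Gy.mulVecLin Sstar)
    (Vstar1 : Submodule ℝ (Fin n → ℝ))
    (hVstar1 : IsMaxOutputNulling A.mulVecLin (B.mulVecLin.coprod H.mulVecLin) E.mulVecLin
      (Dz.mulVecLin.coprod Gz.mulVecLin) Vstar1)
    (Vm : Submodule ℝ (Fin n → ℝ))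
    (hVm : IsMinSelfBounded A.mulVecLin (B.mulVecLin.coprod H.mulVecLin) E.mulVecLin
      (Dz.mulVecLin.coprod Gz.mulVecLin) Vstar1 Vm)
    (hα : CondAlpha B H Dz Gz Vstar)
    (hβ : CondBeta C Gy E Gz Sstar)
    (hSV : Sstar ≤ Vstar) :
    invHull A (LinearMap.range B.mulVecLin ⊔ LinearMap.range H.mulVecLin) =
      invHull A (LinearMap.range B.mulVecLin) ⊔ Vm := by

  set RB := invHull A (LinearMap.range B.mulVecLin) with hRBdef
  have hBRB : LinearMap.range B.mulVecLin ≤ RB := le_invHull _ _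
  -- Vstar ≤ Vstar1
  have hVV1 : Vstar ≤ Vstar1 := by
    apply hVstar1.2
    intro v hv
    obtain ⟨u, h1, h2⟩ := hVstar.1 v hv
    refine ⟨(u, 0), ?_, ?_⟩
    · simpa using h1
    · simpa using h2
  -- im H ≤ RB ⊔ Vm
  have hH : LinearMap.range H.mulVecLin ≤ RB ⊔ Vm := by
    rintro _ ⟨w, rfl⟩
    obtain ⟨u, h1, h2⟩ := hα w
    have hker : (u, w) ∈ LinearMap.ker (Dz.mulVecLin.coprod Gz.mulVecLin) := by
      simp only [LinearMap.mem_ker, LinearMap.coprod_apply, Matrix.mulVecLin_apply]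
      rw [add_comm]; exact h2
    have hmem : H.mulVec w + B.mulVec u ∈ Vm := by
      apply hVm.1.2
      refine ⟨hVV1 h1, ⟨(u, w), hker, ?_⟩⟩
      simp only [LinearMap.coprod_apply, Matrix.mulVecLin_apply]
      rw [add_comm]
    have heq : H.mulVecLin w = (H.mulVec w + B.mulVec u) - B.mulVec u := by
      simp
    rw [heq]
    exact sub_mem (Submodule.mem_sup_right hmem)
      (Submodule.mem_sup_left (hBRB ⟨u, rfl⟩))
  -- RB ⊔ Vm is A-invariant
  have hinv : ∀ x ∈ RB ⊔ Vm, A.mulVec x ∈ RB ⊔ Vm := by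
    intro x hx
    rw [Submodule.mem_sup] at hx
    obtain ⟨y, hy, z, hz, rfl⟩ := hx
    rw [Matrix.mulVec_add]
    refine add_mem (Submodule.mem_sup_left (invHull_inv _ _ y hy)) ?_
    obtain ⟨⟨u, w⟩, h1, _⟩ := hVm.1.1 z hz
    simp only [LinearMap.coprod_apply, Matrix.mulVecLin_apply] at h1
    have heq : A.mulVec z =
        (A.mulVec z + (B.mulVec u + H.mulVec w)) - B.mulVec u - H.mulVec w := by
      abel
    rw [heq]
    exact sub_mem (sub_mem (Submodule.mem_sup_right h1)
      (Submodule.mem_sup_left (hBRB ⟨u, rfl⟩))) (hH ⟨w, rfl⟩)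
  set W0 := invHull A (LinearMap.range B.mulVecLin ⊔ LinearMap.range H.mulVecLin) with hW0def
  have hBW0 : LinearMap.range B.mulVecLin ≤ W0 :=
    le_trans le_sup_left (le_invHull _ _)
  have hHW0 : LinearMap.range H.mulVecLin ≤ W0 :=
    le_trans le_sup_right (le_invHull _ _)
  apply le_antisymm
  · exact invHull_le_of (sup_le (le_trans hBRB le_sup_left) hH) hinv
  · apply sup_le
    · exact invHull_le_of hBW0 (invHull_inv _ _)
    · -- Vm ≤ W0 via Vm ⊓ W0 being self bounded
      have hsb : IsSelfBounded A.mulVecLin (B.mulVecLin.coprod H.mulVecLin) E.mulVecLin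
          (Dz.mulVecLin.coprod Gz.mulVecLin) Vstar1 (Vm ⊓ W0) := by
        constructor
        · intro v hv
          obtain ⟨⟨u, w⟩, h1, h2⟩ := hVm.1.1 v hv.1
          refine ⟨(u, w), ⟨h1, ?_⟩, h2⟩
          simp only [LinearMap.coprod_apply, Matrix.mulVecLin_apply]
          exact add_mem (invHull_inv _ _ v hv.2) (add_mem (hBW0 ⟨u, rfl⟩) (hHW0 ⟨w, rfl⟩))
        · intro x hx
          refine ⟨hVm.1.2 hx, ?_⟩
          obtain ⟨⟨u, w⟩, _, rfl⟩ := hx.2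
          simp only [LinearMap.coprod_apply, Matrix.mulVecLin_apply]
          exact add_mem (hBW0 ⟨u, rfl⟩) (hHW0 ⟨w, rfl⟩)
      exact le_trans (hVm.2 _ hsb) inf_le_right
end

section
/- Assume conditions (α) and (β) hold and that S*(A,H,C,G_y) ⊆ V*(A,B,E,D_z). Then ⟨ker C ∩ ker E | A⟩ = ⟨ker C | A⟩ ∩ S_M, i.e. the largest A-invariant subspace contained in ker C ∩ ker E equals the intersection of the largest A-invariant subspace contained in ker C with S_M. -/
section AuxInvCore

variable {n : ℕ}

lemma invCore_le (M : Matrix (Fin n) (Fin n) ℝ) (U : Submodule ℝ (Fin n → ℝ)) :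
    invCore M U ≤ U :=
  sSup_le fun _ hW => hW.1

lemma invCore_invariant (M : Matrix (Fin n) (Fin n) ℝ) (U : Submodule ℝ (Fin n → ℝ)) :
    ∀ x ∈ invCore M U, M.mulVec x ∈ invCore M U := by
  have h : Submodule.map M.mulVecLin (invCore M U) ≤ invCore M U := by
    rw [invCore, sSup_eq_iSup', Submodule.map_iSup]
    exact iSup_mono fun W => Submodule.map_le_iff_le_comap.mpr
      (fun x hx => by simpa using W.2.2 x hx)
  intro x hx
  have := h (Submodule.mem_map_of_mem hx)
  simpa using this

lemma le_invCore (M : Matrix (Fin n) (Fin n) ℝ) (U W : Submodule ℝ (Fin n → ℝ))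
    (h1 : W ≤ U) (h2 : ∀ x ∈ W, M.mulVec x ∈ W) : W ≤ invCore M U :=
  le_sSup ⟨h1, h2⟩

end AuxInvCore
set_option maxHeartbeats 2000000 in

theorem stmt12 {n m q p r : ℕ}
    (A : Matrix (Fin n) (Fin n) ℝ) (B : Matrix (Fin n) (Fin m) ℝ)
    (H : Matrix (Fin n) (Fin q) ℝ) (C : Matrix (Fin p) (Fin n) ℝ)
    (Gy : Matrix (Fin p) (Fin q) ℝ)
    (E : Matrix (Fin r) (Fin n) ℝ) (Dz : Matrix (Fin r) (Fin m) ℝ)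
    (Gz : Matrix (Fin r) (Fin q) ℝ)
    (Vstar : Submodule ℝ (Fin n → ℝ))
    (hVstar : IsMaxOutputNulling A.mulVecLin B.mulVecLin E.mulVecLin Dz.mulVecLin Vstar)
    (Sstar : Submodule ℝ (Fin n → ℝ))
    (hSstar : IsMinInputContaining A.mulVecLin H.mulVecLin C.mulVecLin Gy.mulVecLin Sstar)
    (Sstar2 : Submodule ℝ (Fin n → ℝ))
    (hSstar2 : IsMinInputContaining A.mulVecLin H.mulVecLin (C.mulVecLin.prod E.mulVecLin)
      (Gy.mulVecLin.prod Gz.mulVecLin) Sstar2)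
    (SM : Submodule ℝ (Fin n → ℝ))
    (hSM : IsMaxSelfHidden A.mulVecLin H.mulVecLin (C.mulVecLin.prod E.mulVecLin)
      (Gy.mulVecLin.prod Gz.mulVecLin) Sstar2 SM)
    (hα : CondAlpha B H Dz Gz Vstar)
    (hβ : CondBeta C Gy E Gz Sstar)
    (hSV : Sstar ≤ Vstar) :
    invCore A (LinearMap.ker C.mulVecLin ⊓ LinearMap.ker E.mulVecLin) =
      invCore A (LinearMap.ker C.mulVecLin) ⊓ SM := by
  set K := (LinearMap.ker C.mulVecLin ⊓ LinearMap.ker E.mulVecLin :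
    Submodule ℝ (Fin n → ℝ)) with hKdef
  -- Step 1 : Sstar2 ≤ Sstar
  have h21 : Sstar2 ≤ Sstar := by
    apply hSstar2.2
    intro x hx w hw
    have hc : C.mulVecLin x + Gy.mulVecLin w = 0 := by
      simpa using congrArg Prod.fst hw
    exact hSstar.1 x hx w hc
  -- key fact : elements of (invCore A (ker C)) ⊓ SM are in ker E
  have keyE : ∀ x, x ∈ invCore A (LinearMap.ker C.mulVecLin) → x ∈ SM →
      E.mulVecLin x = 0 := by
    intro x hxN hxS
    have hxC : C.mulVecLin x = 0 := (invCore_le A _) hxN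
    rcases Submodule.mem_sup.mp (hSM.1.2 hxS) with ⟨s, hs, t, ht, rfl⟩
    rcases (Submodule.mem_comap.mp ht : _) with ⟨w, hw⟩
    have hwC : Gy.mulVecLin w = C.mulVecLin t := congrArg Prod.fst hw
    have hwE : Gz.mulVecLin w = E.mulVecLin t := congrArg Prod.snd hw
    have hc : C.mulVecLin s + Gy.mulVecLin w = 0 := by
      rw [hwC]; simpa [map_add] using hxC
    have he : E.mulVecLin s + Gz.mulVecLin w = 0 := by
      have := hβ s (h21 hs) w (by simpa [Matrix.mulVecLin_apply] using hc)
      simpa [Matrix.mulVecLin_apply] using this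
    rw [hwE] at he
    simpa [map_add] using he
  apply le_antisymm
  · refine le_inf ?_ ?_
    · exact le_invCore _ _ _ (le_trans (invCore_le A K) inf_le_left) (invCore_invariant A K)
    · -- invCore A K ⊔ Sstar2 is self hidden
      have hSH : IsSelfHidden A.mulVecLin H.mulVecLin (C.mulVecLin.prod E.mulVecLin)
          (Gy.mulVecLin.prod Gz.mulVecLin) Sstar2 (invCore A K ⊔ Sstar2) := by
        constructor
        · intro x hx w hw
          rcases Submodule.mem_sup.mp hx with ⟨y, hy, s, hs, rfl⟩
          have hyK := (invCore_le A K) hy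
          have hyC : C.mulVecLin y = 0 := hyK.1
          have hyE : E.mulVecLin y = 0 := hyK.2
          have hc : C.mulVecLin s + Gy.mulVecLin w = 0 := by
            have h1 := congrArg Prod.fst hw
            simpa [map_add, hyC] using h1
          have he : E.mulVecLin s + Gz.mulVecLin w = 0 := by
            have h1 := congrArg Prod.snd hw
            simpa [map_add, hyE] using h1
          have hs' : A.mulVecLin s + H.mulVecLin w ∈ Sstar2 :=
            hSstar2.1 s hs w (Prod.ext hc he)
          have hy' : A.mulVecLin y ∈ invCore A K := by
            simpa [Matrix.mulVecLin_apply] using invCore_invariant A K y hy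
          have heq : A.mulVecLin (y + s) + H.mulVecLin w
              = A.mulVecLin y + (A.mulVecLin s + H.mulVecLin w) := by
            rw [map_add]; abel
          rw [heq]
          exact Submodule.add_mem _ (Submodule.mem_sup_left hy')
            (Submodule.mem_sup_right hs')
        · rw [sup_le_iff]
          refine ⟨?_, le_sup_left⟩
          intro x hx
          apply Submodule.mem_sup_right
          have hxK := (invCore_le A K) hx
          refine Submodule.mem_comap.mpr ⟨0, ?_⟩
          have : (C.mulVecLin.prod E.mulVecLin) x = 0 := Prod.ext hxK.1 hxK.2
          simp [this]
      exact le_trans le_sup_left (hSM.2 _ hSH)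
  · apply le_invCore
    · intro x hx
      have hxC : C.mulVecLin x = 0 := (invCore_le A _) hx.1
      exact ⟨hxC, keyE x hx.1 hx.2⟩
    · intro x hx
      have hxC : C.mulVecLin x = 0 := (invCore_le A _) hx.1
      have hxE : E.mulVecLin x = 0 := keyE x hx.1 hx.2
      constructor
      · exact invCore_invariant A _ x hx.1
      · have h0 : (C.mulVecLin.prod E.mulVecLin) x
            + (Gy.mulVecLin.prod Gz.mulVecLin) 0 = 0 := by
          simp [hxC, hxE, Prod.ext_iff]
        have := hSM.1.1 x hx.2 0 h0
        simpa [Matrix.mulVecLin_apply] using this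
end

section
/- Let S be an (A,H,C,G_y)-self hidden subspace, let V be an (A,B,E,D_z)-self bounded subspace, and let (S,V;K) be a solution triple. Then for every (A,H,C,G_y)-self hidden subspace S̄ and every (A,B,E,D_z)-self bounded subspace V̄ satisfying: (i) for every w ∈ ℝ^q there exists u ∈ ℝ^m with Hw + Bu ∈ V̄ and G_z w + D_z u = 0; (ii) for every x ∈ S̄ and w ∈ ℝ^q with Cx + G_y w = 0 one has Ex + G_z w = 0; (iii) S̄ ⊆ V̄; the triple (S̄,V̄;K) is also a solution triple. -/
theorem stmt13 {n m q p r : ℕ}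
    (A : Matrix (Fin n) (Fin n) ℝ) (B : Matrix (Fin n) (Fin m) ℝ)
    (H : Matrix (Fin n) (Fin q) ℝ) (C : Matrix (Fin p) (Fin n) ℝ)
    (Dy : Matrix (Fin p) (Fin m) ℝ) (Gy : Matrix (Fin p) (Fin q) ℝ)
    (E : Matrix (Fin r) (Fin n) ℝ) (Dz : Matrix (Fin r) (Fin m) ℝ)
    (Gz : Matrix (Fin r) (Fin q) ℝ)
    (Vstar : Submodule ℝ (Fin n → ℝ))
    (hVstar : IsMaxOutputNulling A.mulVecLin B.mulVecLin E.mulVecLin Dz.mulVecLin Vstar)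
    (Sstar : Submodule ℝ (Fin n → ℝ))
    (hSstar : IsMinInputContaining A.mulVecLin H.mulVecLin C.mulVecLin Gy.mulVecLin Sstar)
    (S V : Submodule ℝ (Fin n → ℝ)) (K : Matrix (Fin m) (Fin p) ℝ)
    (hSh : IsSelfHidden A.mulVecLin H.mulVecLin C.mulVecLin Gy.mulVecLin Sstar S)
    (hVb : IsSelfBounded A.mulVecLin B.mulVecLin E.mulVecLin Dz.mulVecLin Vstar V)
    (hTriple : IsSolutionTriple A B H C Dy Gy E Dz Gz S V K) :
    ∀ Sb Vb : Submodule ℝ (Fin n → ℝ),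
      IsSelfHidden A.mulVecLin H.mulVecLin C.mulVecLin Gy.mulVecLin Sstar Sb →
      IsSelfBounded A.mulVecLin B.mulVecLin E.mulVecLin Dz.mulVecLin Vstar Vb →
      CondAlpha B H Dz Gz Vb → CondBeta C Gy E Gz Sb → Sb ≤ Vb →
      IsSolutionTriple A B H C Dy Gy E Dz Gz Sb Vb K := by
  obtain ⟨hS_ic, hV_on, halpha, hbeta, hSV, hK, hIV⟩ := hTriple
  intro Sb Vb hShb hVbb hab hbb hSbVb
  have hSstarS : Sstar ≤ S := hSstar.2 S hS_ic
  have hSstarSb : Sstar ≤ Sb := hSstar.2 Sb hShb.1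
  have hVVstar : V ≤ Vstar := hVstar.2 V hV_on
  have hVbVstar : Vb ≤ Vstar := hVstar.2 Vb hVbb.1
  have expand1 : ∀ (y : Fin n → ℝ) (w : Fin q → ℝ),
      (A + B * K * C).mulVec y + (H + B * K * Gy).mulVec w
        = (A.mulVec y + H.mulVec w)
          + B.mulVec (K.mulVec (C.mulVec y + Gy.mulVec w)) := by
    intro y w
    simp only [Matrix.add_mulVec, Matrix.mulVec_add, ← Matrix.mulVec_mulVec]
    abel
  have expand2 : ∀ (y : Fin n → ℝ) (w : Fin q → ℝ),
      (E + Dz * K * C).mulVec y + (Gz + Dz * K * Gy).mulVec w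
        = (E.mulVec y + Gz.mulVec w)
          + Dz.mulVec (K.mulVec (C.mulVec y + Gy.mulVec w)) := by
    intro y w
    simp only [Matrix.add_mulVec, Matrix.mulVec_add, ← Matrix.mulVec_mulVec]
    abel
  -- crux: for sv ∈ Sstar and any w'', the closed-loop image lands in Vb
  have crux : ∀ sv ∈ Sstar, ∀ w'' : Fin q → ℝ,
      (A + B * K * C).mulVec sv + (H + B * K * Gy).mulVec w'' ∈ Vb := by
    intro sv hsv w''
    obtain ⟨hmemV, hzeq⟩ := hIV sv (hSstarS hsv) w''
    obtain ⟨u3, hu3V, hu3z⟩ := hVbb.1 sv (hSbVb (hSstarSb hsv))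
    obtain ⟨u2, hu2V, hu2z⟩ := hab w''
    simp only [Matrix.mulVecLin_apply] at hu3V hu3z
    set u1 := K.mulVec (C.mulVec sv + Gy.mulVec w'') with hu1
    have hz : E.mulVec sv + Gz.mulVec w'' + Dz.mulVec u1 = 0 := by
      have := hzeq
      rw [expand2] at this
      linear_combination (norm := module) this
    have hrem : B.mulVec (u1 - u2 - u3)
        = ((A + B * K * C).mulVec sv + (H + B * K * Gy).mulVec w'')
          - (A.mulVec sv + B.mulVec u3) - (H.mulVec w'' + B.mulVec u2) := by
      rw [expand1]
      simp only [Matrix.mulVec_sub]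
      abel
    have hker : Dz.mulVec (u1 - u2 - u3) = 0 := by
      simp only [Matrix.mulVec_sub]
      linear_combination (norm := module) hz - hu2z - hu3z
    have hVstarmem : B.mulVec (u1 - u2 - u3) ∈ Vstar := by
      rw [hrem]
      exact Submodule.sub_mem _ (Submodule.sub_mem _ (hVVstar hmemV)
        (hVbVstar hu3V)) (hVbVstar hu2V)
    have hBker : B.mulVec (u1 - u2 - u3) ∈ (LinearMap.ker Dz.mulVecLin).map B.mulVecLin := by
      exact ⟨u1 - u2 - u3, by simpa [Matrix.mulVecLin_apply] using hker,
        by simp [Matrix.mulVecLin_apply]⟩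
    have hVbmem : B.mulVec (u1 - u2 - u3) ∈ Vb := hVbb.2 ⟨hVstarmem, hBker⟩
    have : (A + B * K * C).mulVec sv + (H + B * K * Gy).mulVec w''
        = (A.mulVec sv + B.mulVec u3) + (H.mulVec w'' + B.mulVec u2)
          + B.mulVec (u1 - u2 - u3) := by
      rw [hrem]; abel
    rw [this]
    exact Submodule.add_mem _ (Submodule.add_mem _ hu3V hu2V) hVbmem
  refine ⟨hShb.1, hVbb.1, hab, hbb, hSbVb, hK, ?_⟩
  intro x hx w
  obtain ⟨sv, hsv, v, hv, hxeq⟩ := Submodule.mem_sup.mp (hShb.2 hx)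
  rw [Submodule.mem_comap, LinearMap.mem_range] at hv
  obtain ⟨w0, hw0⟩ := hv
  simp only [Matrix.mulVecLin_apply] at hw0
  have hvSb : v ∈ Sb := by
    have h1 : x - sv = v := by rw [← hxeq]; abel
    rw [← h1]
    exact Sb.sub_mem hx (hSstarSb hsv)
  have hcv : C.mulVec v + Gy.mulVec (-w0) = 0 := by
    rw [Matrix.mulVec_neg, hw0]; abel
  have part1mem : A.mulVec v + H.mulVec (-w0) ∈ Sb := by
    have := hShb.1 v hvSb (-w0) (by simpa [Matrix.mulVecLin_apply] using hcv)
    simpa [Matrix.mulVecLin_apply] using this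
  have part1z : E.mulVec v + Gz.mulVec (-w0) = 0 := hbb v hvSb (-w0) hcv
  have split1 : (A + B * K * C).mulVec x + (H + B * K * Gy).mulVec w
      = ((A + B * K * C).mulVec sv + (H + B * K * Gy).mulVec (w - (-w0)))
        + ((A + B * K * C).mulVec v + (H + B * K * Gy).mulVec (-w0)) := by
    rw [← hxeq]
    simp only [Matrix.mulVec_add, Matrix.mulVec_sub]
    abel
  have split2 : (E + Dz * K * C).mulVec x + (Gz + Dz * K * Gy).mulVec w
      = ((E + Dz * K * C).mulVec sv + (Gz + Dz * K * Gy).mulVec (w - (-w0)))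
        + ((E + Dz * K * C).mulVec v + (Gz + Dz * K * Gy).mulVec (-w0)) := by
    rw [← hxeq]
    simp only [Matrix.mulVec_add, Matrix.mulVec_sub]
    abel
  have pv1 : (A + B * K * C).mulVec v + (H + B * K * Gy).mulVec (-w0)
      = A.mulVec v + H.mulVec (-w0) := by
    rw [expand1, hcv]
    simp
  have pv2 : (E + Dz * K * C).mulVec v + (Gz + Dz * K * Gy).mulVec (-w0) = 0 := by
    rw [expand2, hcv, part1z]
    simp
  constructor
  · rw [split1]
    exact Submodule.add_mem _ (crux sv hsv _) (pv1 ▸ hSbVb part1mem)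
  · rw [split2, pv2, (hIV sv (hSstarS hsv) (w - (-w0))).2]
    simp
end

section
/- Assume DDPDOF is solvable. Then for every matrix K ∈ ℝ^{m×p} the following are equivalent: (1) there exist an (A,H,C,G_y)-self hidden subspace S and an (A,B,E,D_z)-self bounded subspace V such that (S,V;K) is a solution triple; (2) (S*(A,H,C,G_y), V*(A,B,E,D_z); K) is a solution triple. -/
theorem stmt14 {n m q p r : ℕ}
    (A : Matrix (Fin n) (Fin n) ℝ) (B : Matrix (Fin n) (Fin m) ℝ)
    (H : Matrix (Fin n) (Fin q) ℝ) (C : Matrix (Fin p) (Fin n) ℝ)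
    (Dy : Matrix (Fin p) (Fin m) ℝ) (Gy : Matrix (Fin p) (Fin q) ℝ)
    (E : Matrix (Fin r) (Fin n) ℝ) (Dz : Matrix (Fin r) (Fin m) ℝ)
    (Gz : Matrix (Fin r) (Fin q) ℝ)
    (Vstar : Submodule ℝ (Fin n → ℝ))
    (hVstar : IsMaxOutputNulling A.mulVecLin B.mulVecLin E.mulVecLin Dz.mulVecLin Vstar)
    (Sstar : Submodule ℝ (Fin n → ℝ))
    (hSstar : IsMinInputContaining A.mulVecLin H.mulVecLin C.mulVecLin Gy.mulVecLin Sstar)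
    (hsolv : DDPDOFSolvable A B H C Dy Gy E Dz Gz) :
    ∀ K : Matrix (Fin m) (Fin p) ℝ,
      (∃ S V : Submodule ℝ (Fin n → ℝ),
        IsSelfHidden A.mulVecLin H.mulVecLin C.mulVecLin Gy.mulVecLin Sstar S ∧
        IsSelfBounded A.mulVecLin B.mulVecLin E.mulVecLin Dz.mulVecLin Vstar V ∧
        IsSolutionTriple A B H C Dy Gy E Dz Gz S V K) ↔
      IsSolutionTriple A B H C Dy Gy E Dz Gz Sstar Vstar K := by
  intro K
  constructor
  · rintro ⟨S, V, ⟨hSic, -⟩, ⟨hVon, -⟩, hS, hV, hα, hβ, hSV, hK, hmain⟩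
    have hSstarS : Sstar ≤ S := hSstar.2 S hSic
    have hVVstar : V ≤ Vstar := hVstar.2 V hVon
    refine ⟨hSstar.1, hVstar.1, ?_, ?_, ?_, hK, ?_⟩
    · intro w; obtain ⟨u, hu1, hu2⟩ := hα w; exact ⟨u, hVVstar hu1, hu2⟩
    · intro x hx w hw; exact hβ x (hSstarS hx) w hw
    · exact le_trans hSstarS (le_trans hSV hVVstar)
    · intro x hx w
      obtain ⟨h1, h2⟩ := hmain x (hSstarS hx) w
      exact ⟨hVVstar h1, h2⟩
  · intro h
    exact ⟨Sstar, Vstar, ⟨hSstar.1, le_sup_left⟩, ⟨hVstar.1, inf_le_left⟩, h⟩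
end
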